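/- arXiv:1902.09452 — 3 statements merged into one kernel-verified Lean document; each statement's English description precedes it below -/
import Mathlib

section
/- Let a, b, c : ℝ² → ℝ be real-analytic at a point (x₀, y₀), let φ : ℝ → ℝ be real-analytic at x₀ and ψ : ℝ → ℝ real-analytic at y₀, with the compatibility condition φ(x₀) = ψ(y₀). Then there exist an open neighborhood U of (x₀, y₀) and a function z : ℝ² → ℝ, real-analytic on U, such that ∂²z/∂x∂y + a·∂z/∂x + b·∂z/∂y + c·z = 0 on U, z(x, y₀) = φ(x) for all x with (x, y₀) ∈ U, and z(x₀, y) = ψ(y) for all y with (x₀, y) ∈ U. -/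
namespace GoursatAux

open Finset

/-- Bound for `(n+1) x^n` when `0 ≤ x < 1`. -/
lemma exists_geom_bound {x : ℝ} (h0 : 0 ≤ x) (h1 : x < 1) :
    ∃ D : ℝ, 0 ≤ D ∧ ∀ n : ℕ, (n + 1 : ℝ) * x ^ n ≤ D := by
  have hs : Summable (fun n : ℕ => (n : ℝ) ^ 1 * x ^ n) :=
    summable_pow_mul_geometric_of_norm_lt_one 1
      (by rwa [Real.norm_eq_abs, abs_of_nonneg h0])
  have hb : BddAbove (Set.range fun n : ℕ => (n : ℝ) ^ 1 * x ^ n) :=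
    hs.tendsto_atTop_zero.bddAbove_range
  obtain ⟨D₀, hD₀⟩ := hb
  refine ⟨D₀ + 1, ?_, ?_⟩
  · have := hD₀ (Set.mem_range_self 0); simp at this; linarith
  · intro n
    have h2 : (n : ℝ) * x ^ n ≤ D₀ := by
      have := hD₀ (Set.mem_range_self n); simpa using this
    have h3 : x ^ n ≤ 1 := pow_le_one₀ h0 h1.le
    nlinarith [pow_nonneg h0 n]

/-- Summing a summable family by fibers of a map with explicit finite fibers. -/
lemma hasSum_fiberwise_finset {α β : Type*} {f : α → ℝ} {S : ℝ} (hf : HasSum f S)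
    (σ : α → β) (F : β → Finset α) (hF : ∀ x b, x ∈ F b ↔ σ x = b) :
    HasSum (fun b => ∑ x ∈ F b, f x) S := by
  have h1 : HasSum (f ∘ (Equiv.sigmaFiberEquiv σ)) S :=
    (Equiv.hasSum_iff (Equiv.sigmaFiberEquiv σ)).2 hf
  refine HasSum.sigma h1 (fun b => ?_)
  haveI : Fintype {x // σ x = b} := Fintype.subtype (F b) (fun x => hF x b)
  rw [Finset.sum_subtype (F b) (fun x => hF x b) f]
  exact hasSum_fintype _

/-- Summability over `ℕ × ℕ` from a bound along diagonals. -/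
lemma summable_of_diag_bound {f : ℕ × ℕ → ℝ} {h : ℕ → ℝ}
    (hb : ∀ q, |f q| ≤ h (q.1 + q.2)) (hh : Summable (fun k : ℕ => ((k : ℝ) + 1) * h k)) :
    Summable f := by
  have h0 : ∀ k, 0 ≤ h k := fun k => le_trans (abs_nonneg _) (by simpa using hb (k, 0))
  set σ : ℕ × ℕ → ℕ := fun q => q.1 + q.2 with hσ
  haveI : ∀ k, Fintype {q : ℕ × ℕ // σ q = k} := fun k =>
    Fintype.subtype (Finset.HasAntidiagonal.antidiagonal k) (fun x => Finset.HasAntidiagonal.mem_antidiagonal)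
  have hcard : ∀ k, Fintype.card {q : ℕ × ℕ // σ q = k} = k + 1 := fun k => by
    rw [Fintype.card_of_subtype (Finset.HasAntidiagonal.antidiagonal k) (fun x => Finset.HasAntidiagonal.mem_antidiagonal)]
    exact Finset.Nat.card_antidiagonal k
  have hg : Summable (fun q : ℕ × ℕ => h (σ q)) := by
    refine (Equiv.summable_iff (Equiv.sigmaFiberEquiv σ)).1 ?_
    refine (summable_sigma_of_nonneg (fun x => h0 _)).2 ⟨?_, ?_⟩
    · intro k; exact summable_of_finite_support (Set.toFinite _)
    · have hk : ∀ k : ℕ, (∑' c : {q : ℕ × ℕ // σ q = k},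
          ((fun q : ℕ × ℕ => h (σ q)) ∘ (Equiv.sigmaFiberEquiv σ)) ⟨k, c⟩)
          = ((k : ℝ) + 1) * h k := by
        intro k
        have hc : ∀ c : {q : ℕ × ℕ // σ q = k},
            ((fun q : ℕ × ℕ => h (σ q)) ∘ (Equiv.sigmaFiberEquiv σ)) ⟨k, c⟩ = h k := fun c => by
          simp [Equiv.sigmaFiberEquiv, c.2]
        rw [tsum_congr hc, tsum_const, Nat.card_eq_fintype_card, hcard k]
        simp [nsmul_eq_mul]
      exact (summable_congr hk).2 hh
  exact (hg.of_nonneg_of_le (fun q => abs_nonneg _) (fun q => hb q)).of_abs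

section part2

/-- monomial family -/
def mono (v : ℕ × ℕ → ℝ) (X Y : ℝ) : ℕ × ℕ → ℝ := fun q => v q * X ^ q.1 * Y ^ q.2

/-- sum of the double power series -/
noncomputable def G (v : ℕ × ℕ → ℝ) (X Y : ℝ) : ℝ := ∑' q, mono v X Y q

/-- absolute summability of coefficients against radius R -/
def SummableAt (v : ℕ × ℕ → ℝ) (R : ℝ) : Prop :=
  Summable (fun q : ℕ × ℕ => |v q| * R ^ q.1 * R ^ q.2)

/-- convolution of coefficients -/
def conv2 (v w : ℕ × ℕ → ℝ) : ℕ × ℕ → ℝ := fun r =>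
  ∑ q ∈ range (r.1 + 1) ×ˢ range (r.2 + 1), v q * w (r.1 - q.1, r.2 - q.2)

/-- coefficients of the x-derivative -/
def dxc (v : ℕ × ℕ → ℝ) : ℕ × ℕ → ℝ := fun q => ((q.1 : ℝ) + 1) * v (q.1 + 1, q.2)

/-- coefficients of the y-derivative -/
def dyc (v : ℕ × ℕ → ℝ) : ℕ × ℕ → ℝ := fun q => ((q.2 : ℝ) + 1) * v (q.1, q.2 + 1)

/-- transpose -/
def trc (v : ℕ × ℕ → ℝ) : ℕ × ℕ → ℝ := fun q => v (q.2, q.1)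

lemma SummableAt.of_le {v : ℕ × ℕ → ℝ} {R R' : ℝ} (h : SummableAt v R)
    (h0 : 0 ≤ R') (hle : R' ≤ R) : SummableAt v R' := by
  refine h.of_nonneg_of_le (fun q => by positivity) (fun q => ?_)
  have h1 : R' ^ q.1 ≤ R ^ q.1 := pow_le_pow_left₀ h0 hle _
  have h2 : R' ^ q.2 ≤ R ^ q.2 := pow_le_pow_left₀ h0 hle _
  have hR : (0:ℝ) ≤ R := le_trans h0 hle
  gcongr

lemma SummableAt.summable_abs_mono {v : ℕ × ℕ → ℝ} {R X Y : ℝ} (h : SummableAt v R)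
    (hX : |X| ≤ R) (hY : |Y| ≤ R) :
    Summable (fun q => |mono v X Y q|) := by
  refine h.of_nonneg_of_le (fun q => abs_nonneg _) (fun q => ?_)
  have : |mono v X Y q| = |v q| * |X| ^ q.1 * |Y| ^ q.2 := by
    simp [mono, abs_mul, abs_pow]
  rw [this]
  have hR : (0:ℝ) ≤ R := le_trans (abs_nonneg X) hX
  gcongr

lemma SummableAt.summable_mono {v : ℕ × ℕ → ℝ} {R X Y : ℝ} (h : SummableAt v R)
    (hX : |X| ≤ R) (hY : |Y| ≤ R) : Summable (mono v X Y) :=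
  (h.summable_abs_mono hX hY).of_abs

lemma SummableAt.swap {v : ℕ × ℕ → ℝ} {R : ℝ} (h : SummableAt v R) :
    SummableAt (trc v) R := by
  have := (Equiv.summable_iff (Equiv.prodComm ℕ ℕ)).2 h
  refine this.congr (fun q => ?_)
  simp only [Function.comp, Equiv.prodComm_apply, Prod.fst_swap, Prod.snd_swap,
    GoursatAux.trc, Prod.swap]
  ring

lemma G_trc (v : ℕ × ℕ → ℝ) (X Y : ℝ) : G (trc v) Y X = G v X Y := by
  rw [G, G, ← Equiv.tsum_eq (Equiv.prodComm ℕ ℕ) (mono v X Y)]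
  refine tsum_congr (fun q => ?_)
  simp only [mono, GoursatAux.trc, Equiv.prodComm_apply, Prod.fst_swap, Prod.snd_swap, Prod.swap]
  ring

/-- the Cauchy product -/
lemma hasSum_conv {v w : ℕ × ℕ → ℝ} {R X Y : ℝ} (hv : SummableAt v R) (hw : SummableAt w R)
    (hX : |X| ≤ R) (hY : |Y| ≤ R) :
    HasSum (mono (conv2 v w) X Y) (G v X Y * G w X Y) := by
  have hva := hv.summable_abs_mono hX hY
  have hwa := hw.summable_abs_mono hX hY
  have hva' : Summable (fun q => ‖mono v X Y q‖) := by simpa [Real.norm_eq_abs] using hva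
  have hwa' : Summable (fun q => ‖mono w X Y q‖) := by simpa [Real.norm_eq_abs] using hwa
  have hprod : Summable (fun z : (ℕ × ℕ) × (ℕ × ℕ) => mono v X Y z.1 * mono w X Y z.2) :=
    summable_mul_of_summable_norm hva' hwa'
  have htsum : ∑' z : (ℕ × ℕ) × (ℕ × ℕ), mono v X Y z.1 * mono w X Y z.2
      = G v X Y * G w X Y := (tsum_mul_tsum_of_summable_norm hva' hwa').symm
  -- fiberwise regrouping along the sum of indices
  set σ : (ℕ × ℕ) × (ℕ × ℕ) → ℕ × ℕ := fun z => z.1 + z.2 with hσdef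
  set F : ℕ × ℕ → Finset ((ℕ × ℕ) × (ℕ × ℕ)) := fun r =>
    (range (r.1 + 1) ×ˢ range (r.2 + 1)).image (fun q => (q, (r.1 - q.1, r.2 - q.2))) with hFdef
  have hmem : ∀ z r, z ∈ F r ↔ σ z = r := by
    intro z r
    constructor
    · intro hz
      simp only [hFdef, Finset.mem_image, Finset.mem_product, Finset.mem_range] at hz
      obtain ⟨q, ⟨hq1, hq2⟩, rfl⟩ := hz
      simp only [hσdef, Prod.ext_iff, Prod.fst_add, Prod.snd_add]
      refine ⟨by omega, by omega⟩
    · intro hz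
      simp only [hσdef] at hz
      simp only [hFdef, Finset.mem_image, Finset.mem_product, Finset.mem_range]
      refine ⟨z.1, ⟨?_, ?_⟩, ?_⟩
      · have : z.1.1 + z.2.1 = r.1 := by rw [← hz]; rfl
        omega
      · have : z.1.2 + z.2.2 = r.2 := by rw [← hz]; rfl
        omega
      · have h1 : z.1.1 + z.2.1 = r.1 := by rw [← hz]; rfl
        have h2 : z.1.2 + z.2.2 = r.2 := by rw [← hz]; rfl
        have : (r.1 - z.1.1, r.2 - z.1.2) = z.2 := by
          apply Prod.ext <;> simp <;> omega
        rw [this]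
  have hfib := hasSum_fiberwise_finset (htsum ▸ hprod.hasSum) σ F hmem
  have hcong : ∀ r : ℕ × ℕ,
      (∑ z ∈ F r, mono v X Y z.1 * mono w X Y z.2) = mono (conv2 v w) X Y r := by
    intro r
    simp only [hFdef]
    rw [Finset.sum_image (by
      intro x hx y hy hxy
      exact (Prod.ext_iff.1 hxy).1)]
    simp only [mono, conv2]
    rw [Finset.sum_mul, Finset.sum_mul]
    refine Finset.sum_congr rfl (fun q hq => ?_)
    simp only [Finset.mem_product, Finset.mem_range] at hq
    have e1 : X ^ q.1 * X ^ (r.1 - q.1) = X ^ r.1 := by rw [← pow_add]; congr 1; omega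
    have e2 : Y ^ q.2 * Y ^ (r.2 - q.2) = Y ^ r.2 := by rw [← pow_add]; congr 1; omega
    rw [← e1, ← e2]
    ring
  exact (funext hcong) ▸ hfib

lemma SummableAt.dxc_of {v : ℕ × ℕ → ℝ} {R R' : ℝ} (hv : SummableAt v R)
    (h0 : 0 ≤ R') (hR : R' < R) : SummableAt (dxc v) R' := by
  have hRpos : 0 < R := lt_of_le_of_lt h0 hR
  obtain ⟨D, hD0, hD⟩ := exists_geom_bound (x := R' / R)
    (div_nonneg h0 hRpos.le) ((div_lt_one hRpos).2 hR)
  have hinj : Function.Injective (fun q : ℕ × ℕ => (q.1 + 1, q.2)) := by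
    intro a b h; simpa [Prod.ext_iff] using h
  have hsum : Summable (fun q : ℕ × ℕ =>
      (D / R) * (|v (q.1 + 1, q.2)| * R ^ (q.1 + 1) * R ^ q.2)) := by
    exact ((hv.comp_injective hinj).mul_left _)
  refine hsum.of_nonneg_of_le (fun q => by positivity) (fun q => ?_)
  have key : ((q.1 : ℝ) + 1) * R' ^ q.1 ≤ (D / R) * R ^ (q.1 + 1) := by
    have h1 : ((q.1 : ℝ) + 1) * (R' / R) ^ q.1 ≤ D := hD q.1
    have hpow : (R' / R) ^ q.1 * R ^ q.1 = R' ^ q.1 := by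
      rw [div_pow]; field_simp
    have h2 : ((q.1:ℝ)+1) * R' ^ q.1 ≤ D * R ^ q.1 := by
      calc ((q.1:ℝ)+1) * R' ^ q.1 = (((q.1:ℝ)+1) * (R'/R) ^ q.1) * R ^ q.1 := by
            rw [mul_assoc, hpow]
        _ ≤ D * R ^ q.1 := mul_le_mul_of_nonneg_right h1 (pow_nonneg hRpos.le _)
    have h3 : D * R ^ q.1 = (D / R) * R ^ (q.1+1) := by
      field_simp; ring
    rw [← h3]; exact h2
  have : |dxc v q| = ((q.1 : ℝ) + 1) * |v (q.1 + 1, q.2)| := by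
    rw [dxc, abs_mul, abs_of_nonneg (by positivity : (0:ℝ) ≤ (q.1:ℝ)+1)]
  rw [this]
  have hy : R' ^ q.2 ≤ R ^ q.2 := pow_le_pow_left₀ h0 hR.le _
  calc ((q.1 : ℝ) + 1) * |v (q.1 + 1, q.2)| * R' ^ q.1 * R' ^ q.2
      = |v (q.1 + 1, q.2)| * (((q.1 : ℝ) + 1) * R' ^ q.1) * R' ^ q.2 := by ring
    _ ≤ |v (q.1 + 1, q.2)| * ((D / R) * R ^ (q.1 + 1)) * R ^ q.2 := by
        gcongr
    _ = (D / R) * (|v (q.1 + 1, q.2)| * R ^ (q.1 + 1) * R ^ q.2) := by ring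

lemma SummableAt.dyc_of {v : ℕ × ℕ → ℝ} {R R' : ℝ} (hv : SummableAt v R)
    (h0 : 0 ≤ R') (hR : R' < R) : SummableAt (dyc v) R' := by
  have h1 : SummableAt (dxc (trc v)) R' := (SummableAt.swap hv).dxc_of h0 hR
  have h2 : SummableAt (trc (dxc (trc v))) R' := h1.swap
  refine h2.congr (fun q => ?_)
  rfl

lemma hasDerivAt_G_x {v : ℕ × ℕ → ℝ} {R X Y : ℝ} (hv : SummableAt v R)
    (hX : |X| < R) (hY : |Y| < R) :
    HasDerivAt (fun t => G v t Y) (G (dxc v) X Y) X := by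
  have hRpos : 0 < R := lt_of_le_of_lt (abs_nonneg X) hX
  set R' : ℝ := (|X| + R) / 2 with hR'def
  have hXR' : |X| < R' := by rw [hR'def]; linarith
  have hR'R : R' < R := by rw [hR'def]; linarith
  have hR'pos : 0 < R' := lt_of_le_of_lt (abs_nonneg X) hXR'
  obtain ⟨D, hD0, hD⟩ := exists_geom_bound (x := R' / R)
    (div_nonneg hR'pos.le hRpos.le) ((div_lt_one hRpos).2 hR'R)
  set g : ℕ × ℕ → ℝ → ℝ := fun q t => v q * t ^ q.1 * Y ^ q.2 with hgdef
  set g' : ℕ × ℕ → ℝ → ℝ := fun q t => v q * ((q.1 : ℝ) * t ^ (q.1 - 1)) * Y ^ q.2 with hg'def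
  set u : ℕ × ℕ → ℝ := fun q => (D / R) * (|v q| * R ^ q.1 * R ^ q.2) with hudef
  have hu : Summable u := hv.mul_left _
  have hgderiv : ∀ q : ℕ × ℕ, ∀ t ∈ Metric.ball (0:ℝ) R', HasDerivAt (g q) (g' q t) t := by
    intro q t _
    have h := ((hasDerivAt_pow q.1 t).const_mul (v q)).mul_const (Y ^ q.2)
    convert h using 2 <;> ring
  have hbound : ∀ q : ℕ × ℕ, ∀ t ∈ Metric.ball (0:ℝ) R', ‖g' q t‖ ≤ u q := by
    intro q t ht
    rw [Metric.mem_ball, Real.dist_eq, sub_zero] at ht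
    rw [hg'def, Real.norm_eq_abs]
    have habs : |v q * ((q.1 : ℝ) * t ^ (q.1 - 1)) * Y ^ q.2|
        = |v q| * ((q.1 : ℝ) * |t| ^ (q.1 - 1)) * |Y| ^ q.2 := by
      rw [abs_mul, abs_mul, abs_mul, abs_pow, abs_pow, Nat.abs_cast]
    rw [habs]
    have hq1 : (q.1 : ℝ) * |t| ^ (q.1 - 1) ≤ (D / R) * R ^ q.1 := by
      rcases Nat.eq_zero_or_pos q.1 with h | h
      · simp [h]; positivity
      · obtain ⟨m, hm⟩ := Nat.exists_eq_succ_of_ne_zero (Nat.pos_iff_ne_zero.mp h)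
        rw [hm]
        have h1 : |t| ^ m ≤ R' ^ m := pow_le_pow_left₀ (abs_nonneg _) ht.le m
        have h2 : ((m : ℝ) + 1) * (R' / R) ^ m ≤ D := hD m
        have h3 : ((m + 1 : ℕ) : ℝ) * |t| ^ (m + 1 - 1) ≤ ((m:ℝ)+1) * R' ^ m := by
          push_cast [Nat.add_sub_cancel]
          gcongr
        refine h3.trans ?_
        have hpow : (R' / R) ^ m * R ^ m = R' ^ m := by rw [div_pow]; field_simp
        have h4 : ((m:ℝ)+1) * R' ^ m ≤ D * R ^ m := by
          calc ((m:ℝ)+1) * R' ^ m = (((m:ℝ)+1) * (R'/R) ^ m) * R ^ m := by rw [mul_assoc, hpow]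
            _ ≤ D * R ^ m := mul_le_mul_of_nonneg_right h2 (pow_nonneg hRpos.le _)
        have h5 : D * R ^ m = (D / R) * R ^ (m+1) := by field_simp; ring
        rw [← h5]; exact h4
    have hq2 : |Y| ^ q.2 ≤ R ^ q.2 := pow_le_pow_left₀ (abs_nonneg _) hY.le _
    calc |v q| * ((q.1 : ℝ) * |t| ^ (q.1 - 1)) * |Y| ^ q.2
        ≤ |v q| * ((D / R) * R ^ q.1) * R ^ q.2 := by
          gcongr
      _ = u q := by rw [hudef]; ring
  have hXmem : X ∈ Metric.ball (0:ℝ) R' := by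
    rw [Metric.mem_ball, Real.dist_eq, sub_zero]; exact hXR'
  have hsum0 : Summable (fun q => g q X) := by
    have := hv.summable_mono hX.le hY.le
    exact this
  have hmain := hasDerivAt_tsum_of_isPreconnected hu Metric.isOpen_ball
    (convex_ball (0:ℝ) R').isPreconnected hgderiv hbound hXmem hsum0 hXmem
  have hfun : (fun t => ∑' q, g q t) = (fun t => G v t Y) := rfl
  rw [hfun] at hmain
  have hval : (∑' q, g' q X) = G (dxc v) X Y := by
    have hinj : Function.Injective (fun q : ℕ × ℕ => (q.1 + 1, q.2)) := by
      intro a b h; simpa [Prod.ext_iff] using h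
    have hsupp : Function.support (fun q => g' q X) ⊆
        Set.range (fun q : ℕ × ℕ => (q.1 + 1, q.2)) := by
      intro q hq
      rcases Nat.eq_zero_or_pos q.1 with h | h
      · exfalso; apply hq; simp [hg'def, h]
      · obtain ⟨m, hm⟩ := Nat.exists_eq_succ_of_ne_zero (Nat.pos_iff_ne_zero.mp h)
        exact ⟨(m, q.2), by rw [Prod.ext_iff]; exact ⟨by simp [hm], rfl⟩⟩
    have := Function.Injective.tsum_eq hinj (f := fun q => g' q X) hsupp
    rw [← this]
    refine tsum_congr (fun q => ?_)
    simp only [hg'def, mono, dxc, Nat.add_sub_cancel]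
    push_cast
    ring
  rwa [hval] at hmain

lemma hasDerivAt_G_y {v : ℕ × ℕ → ℝ} {R X Y : ℝ} (hv : SummableAt v R)
    (hX : |X| < R) (hY : |Y| < R) :
    HasDerivAt (fun t => G v X t) (G (dyc v) X Y) Y := by
  have h := hasDerivAt_G_x (v := trc v) (SummableAt.swap hv) hY hX
  have h1 : (fun t => G (trc v) t X) = (fun t => G v X t) := by
    funext t; exact G_trc v X t
  have h2 : G (dxc (trc v)) Y X = G (dyc v) X Y := by
    have : trc (dxc (trc v)) = dyc v := rfl
    rw [← this, G_trc]
  rw [h1, h2] at h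
  exact h

end part2

section recursion

/-- Coefficients of the solution, defined by the Goursat recursion. -/
noncomputable def solU (ac bc cc : ℕ × ℕ → ℝ) (φc ψc : ℕ → ℝ) : ℕ × ℕ → ℝ
  | (m, 0) => φc m
  | (0, n+1) => ψc (n+1)
  | (m+1, n+1) =>
      (-((((m:ℝ)+1) * ((n:ℝ)+1))⁻¹)) *
      ((∑ q ∈ range (m+1) ×ˢ range (n+1),
          ac q * ((((m - q.1 : ℕ) : ℝ) + 1) * solU ac bc cc φc ψc (m - q.1 + 1, n - q.2))) +
       (∑ q ∈ range (m+1) ×ˢ range (n+1),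
          bc q * ((((n - q.2 : ℕ) : ℝ) + 1) * solU ac bc cc φc ψc (m - q.1, n - q.2 + 1))) +
       (∑ q ∈ range (m+1) ×ˢ range (n+1),
          cc q * solU ac bc cc φc ψc (m - q.1, n - q.2)))
  termination_by p => p.1 + p.2
  decreasing_by all_goals omega

variable (ac bc cc : ℕ × ℕ → ℝ) (φc ψc : ℕ → ℝ)

lemma solU_base_x (m : ℕ) : solU ac bc cc φc ψc (m, 0) = φc m := by
  rw [solU]

lemma solU_base_y (n : ℕ) : solU ac bc cc φc ψc (0, n+1) = ψc (n+1) := by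
  rw [solU]

lemma solU_pde (m n : ℕ) :
    dyc (dxc (solU ac bc cc φc ψc)) (m, n)
      + conv2 ac (dxc (solU ac bc cc φc ψc)) (m, n)
      + conv2 bc (dyc (solU ac bc cc φc ψc)) (m, n)
      + conv2 cc (solU ac bc cc φc ψc) (m, n) = 0 := by
  set u := solU ac bc cc φc ψc with hu
  have h1 : dyc (dxc u) (m, n) = ((n:ℝ)+1) * (((m:ℝ)+1) * u (m+1, n+1)) := rfl
  have heq : u (m+1, n+1) =
      (-((((m:ℝ)+1) * ((n:ℝ)+1))⁻¹)) *
      ((∑ q ∈ range (m+1) ×ˢ range (n+1),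
          ac q * ((((m - q.1 : ℕ) : ℝ) + 1) * u (m - q.1 + 1, n - q.2))) +
       (∑ q ∈ range (m+1) ×ˢ range (n+1),
          bc q * ((((n - q.2 : ℕ) : ℝ) + 1) * u (m - q.1, n - q.2 + 1))) +
       (∑ q ∈ range (m+1) ×ˢ range (n+1),
          cc q * u (m - q.1, n - q.2))) := by
    rw [hu, solU]
  have h2 : conv2 ac (dxc u) (m, n) =
      ∑ q ∈ range (m+1) ×ˢ range (n+1),
        ac q * ((((m - q.1 : ℕ) : ℝ) + 1) * u (m - q.1 + 1, n - q.2)) := by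
    refine Finset.sum_congr rfl (fun q hq => ?_)
    rfl
  have h3 : conv2 bc (dyc u) (m, n) =
      ∑ q ∈ range (m+1) ×ˢ range (n+1),
        bc q * ((((n - q.2 : ℕ) : ℝ) + 1) * u (m - q.1, n - q.2 + 1)) := by
    refine Finset.sum_congr rfl (fun q hq => ?_)
    rfl
  have h4 : conv2 cc u (m, n) =
      ∑ q ∈ range (m+1) ×ˢ range (n+1), cc q * u (m - q.1, n - q.2) := rfl
  rw [h1, h2, h3, h4, heq]
  have hmn : (((m:ℝ)+1) * ((n:ℝ)+1)) ≠ 0 := by positivity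
  field_simp
  ring

lemma solU_bound {ρ : ℝ} (hρ : 0 < ρ)
    (HA : SummableAt ac ρ) (HB : SummableAt bc ρ) (HC : SummableAt cc ρ)
    (HΦ : Summable (fun k => |φc k| * ρ ^ k)) (HΨ : Summable (fun k => |ψc k| * ρ ^ k)) :
    ∃ M K : ℝ, 0 ≤ M ∧ 1 ≤ K ∧
      ∀ q : ℕ × ℕ, |solU ac bc cc φc ψc q| ≤ M * K ^ (q.1 + q.2) := by
  classical
  set u := solU ac bc cc φc ψc with hu
  set SA := ∑' q : ℕ × ℕ, |ac q| * ρ ^ q.1 * ρ ^ q.2 with hSA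
  set SB := ∑' q : ℕ × ℕ, |bc q| * ρ ^ q.1 * ρ ^ q.2 with hSB
  set SC := ∑' q : ℕ × ℕ, |cc q| * ρ ^ q.1 * ρ ^ q.2 with hSC
  set Sφ := ∑' k : ℕ, |φc k| * ρ ^ k with hSφ
  set Sψ := ∑' k : ℕ, |ψc k| * ρ ^ k with hSψ
  have hSAnn : 0 ≤ SA := tsum_nonneg (fun q => by positivity)
  have hSBnn : 0 ≤ SB := tsum_nonneg (fun q => by positivity)
  have hSCnn : 0 ≤ SC := tsum_nonneg (fun q => by positivity)
  have hSφnn : 0 ≤ Sφ := tsum_nonneg (fun q => by positivity)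
  have hSψnn : 0 ≤ Sψ := tsum_nonneg (fun q => by positivity)
  set K := max (max 1 ρ⁻¹) (SA + SB + SC + 1) with hK
  have hK1 : (1:ℝ) ≤ K := le_trans (le_max_left 1 ρ⁻¹) (le_max_left _ _)
  have hKpos : (0:ℝ) < K := lt_of_lt_of_le one_pos hK1
  have hKρ : ρ⁻¹ ≤ K := le_trans (le_max_right 1 ρ⁻¹) (le_max_left _ _)
  have hKS : SA + SB + SC + 1 ≤ K := le_max_right _ _
  have hKinv : K⁻¹ ≤ ρ := by
    rw [inv_le_comm₀ hKpos hρ]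
    exact hKρ
  have hKinv0 : (0:ℝ) ≤ K⁻¹ := by positivity
  set M := max Sφ Sψ with hM
  have hMnn : 0 ≤ M := le_trans hSφnn (le_max_left _ _)
  refine ⟨M, K, hMnn, hK1, ?_⟩
  have hρinv : ρ ^ (0:ℕ) = 1 := rfl
  -- base bounds
  have hbase : ∀ (S : ℝ) (fc : ℕ → ℝ), 0 ≤ S → S ≤ M →
      (Summable (fun k => |fc k| * ρ ^ k)) →
      (∀ m, |fc m| * ρ ^ m ≤ S) → ∀ m : ℕ, |fc m| ≤ M * K ^ m := by
    intro S fc hSnn hSM hsumm hle m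
    have hmul : ρ ^ m * (ρ⁻¹) ^ m = 1 := by
      rw [← mul_pow, mul_inv_cancel₀ hρ.ne', one_pow]
    have h2 : |fc m| ≤ S * (ρ⁻¹) ^ m := by
      calc |fc m| = |fc m| * (ρ ^ m * (ρ⁻¹) ^ m) := by rw [hmul, mul_one]
        _ = (|fc m| * ρ ^ m) * (ρ⁻¹) ^ m := by ring
        _ ≤ S * (ρ⁻¹) ^ m := mul_le_mul_of_nonneg_right (hle m) (by positivity)
    refine h2.trans ?_
    have h3 : (ρ⁻¹) ^ m ≤ K ^ m := pow_le_pow_left₀ (by positivity) hKρ m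
    exact mul_le_mul hSM h3 (by positivity) hMnn
  have hbaseφ : ∀ m : ℕ, |φc m| ≤ M * K ^ m :=
    hbase Sφ φc hSφnn (le_max_left _ _) HΦ
      (fun m => Summable.le_tsum HΦ m (fun j _ => by positivity))
  have hbaseψ : ∀ m : ℕ, |ψc m| ≤ M * K ^ m :=
    hbase Sψ ψc hSψnn (le_max_right _ _) HΨ
      (fun m => Summable.le_tsum HΨ m (fun j _ => by positivity))
  -- the main strong induction
  have main : ∀ N : ℕ, ∀ q : ℕ × ℕ, q.1 + q.2 = N → |u q| ≤ M * K ^ (q.1 + q.2) := by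
    intro N
    induction N using Nat.strong_induction_on with
    | _ N IH =>
      rintro ⟨m, n⟩ hq
      subst hq
      cases n with
      | zero =>
        have : u (m, 0) = φc m := solU_base_x ac bc cc φc ψc m
        rw [this]
        simpa using hbaseφ m
      | succ n =>
        cases m with
        | zero =>
          have : u (0, n+1) = ψc (n+1) := solU_base_y ac bc cc φc ψc n
          rw [this]
          simpa using hbaseψ (n+1)
        | succ m =>
          have hIH : ∀ a b : ℕ, a + b < (m+1) + (n+1) → |u (a, b)| ≤ M * K ^ (a + b) := by
            intro a b h
            exact IH (a + b) (by simpa using h) (a, b) rfl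
          set a : ℝ := (m : ℝ) + 1 with hadef
          set b : ℝ := (n : ℝ) + 1 with hbdef
          have ha1 : (1:ℝ) ≤ a := by rw [hadef]; have := Nat.cast_nonneg (α := ℝ) m; linarith
          have hb1 : (1:ℝ) ≤ b := by rw [hbdef]; have := Nat.cast_nonneg (α := ℝ) n; linarith
          have ha0 : (0:ℝ) < a := lt_of_lt_of_le one_pos ha1
          have hb0 : (0:ℝ) < b := lt_of_lt_of_le one_pos hb1
          set P := M * K ^ (m + n + 1) with hPdef
          have hPnn : 0 ≤ P := by positivity
          set rng := range (m+1) ×ˢ range (n+1) with hrng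
          set S1 := ∑ q ∈ rng, ac q * ((((m - q.1 : ℕ) : ℝ) + 1) * u (m - q.1 + 1, n - q.2))
            with hS1def
          set S2 := ∑ q ∈ rng, bc q * ((((n - q.2 : ℕ) : ℝ) + 1) * u (m - q.1, n - q.2 + 1))
            with hS2def
          set S3 := ∑ q ∈ rng, cc q * u (m - q.1, n - q.2) with hS3def
          have heq : u (m+1, n+1) = (-((a * b)⁻¹)) * (S1 + S2 + S3) := by
            rw [hu, hadef, hbdef, hS1def, hS2def, hS3def, hrng, solU]
          have hpowsplit : ∀ e i E : ℕ, e + i = E → K ^ e = K ^ E * (K⁻¹) ^ i := by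
            intro e i E h
            have h1 : K ^ E = K ^ e * K ^ i := by rw [← pow_add, h]
            have h2 : K ^ i * (K⁻¹) ^ i = 1 := by
              rw [← mul_pow, mul_inv_cancel₀ hKpos.ne', one_pow]
            rw [h1, mul_assoc, h2, mul_one]
          have hKρpow : ∀ q : ℕ × ℕ, (K⁻¹) ^ (q.1 + q.2) ≤ ρ ^ q.1 * ρ ^ q.2 := by
            intro q
            rw [pow_add]
            have g1 : (K⁻¹) ^ q.1 ≤ ρ ^ q.1 := pow_le_pow_left₀ hKinv0 hKinv _
            have g2 : (K⁻¹) ^ q.2 ≤ ρ ^ q.2 := pow_le_pow_left₀ hKinv0 hKinv _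
            exact mul_le_mul g1 g2 (by positivity) (by positivity)
          -- generic bound for the convolution sums
          have hgen : ∀ (w : ℕ × ℕ → ℝ) (SW Cb : ℝ) (d : ℕ × ℕ → ℝ) (idx : ℕ × ℕ → ℕ × ℕ)
              (E : ℕ), 0 ≤ Cb →
              Summable (fun q : ℕ × ℕ => |w q| * ρ ^ q.1 * ρ ^ q.2) →
              (∑' q : ℕ × ℕ, |w q| * ρ ^ q.1 * ρ ^ q.2) = SW →
              (∀ q ∈ rng, 0 ≤ d q ∧ d q ≤ Cb ∧ (idx q).1 + (idx q).2 + (q.1 + q.2) = E ∧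
                (idx q).1 + (idx q).2 < (m+1) + (n+1)) →
              |∑ q ∈ rng, w q * (d q * u (idx q))| ≤ Cb * (M * K ^ E) * SW := by
            intro w SW Cb d idx E hCb hsumw hSW hq
            have habs := Finset.abs_sum_le_sum_abs
              (fun q : ℕ × ℕ => w q * (d q * u (idx q))) rng
            refine habs.trans ?_
            have hterm : ∀ q ∈ rng, |w q * (d q * u (idx q))|
                ≤ (Cb * (M * K ^ E)) * (|w q| * ρ ^ q.1 * ρ ^ q.2) := by
              intro q hqmem
              obtain ⟨hd0, hdC, hsum, hlt⟩ := hq q hqmem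
              have hu1 : |u (idx q)| ≤ M * K ^ ((idx q).1 + (idx q).2) := by
                have := hIH (idx q).1 (idx q).2 hlt
                simpa using this
              have hsplit : K ^ ((idx q).1 + (idx q).2) = K ^ E * (K⁻¹) ^ (q.1 + q.2) :=
                hpowsplit _ _ _ hsum
              calc |w q * (d q * u (idx q))| = |w q| * (d q * |u (idx q)|) := by
                    rw [abs_mul, abs_mul, abs_of_nonneg hd0]
                _ ≤ |w q| * (Cb * (M * K ^ ((idx q).1 + (idx q).2))) := by
                    refine mul_le_mul_of_nonneg_left ?_ (abs_nonneg _)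
                    exact mul_le_mul hdC hu1 (abs_nonneg _) hCb
                _ = |w q| * (Cb * (M * (K ^ E * (K⁻¹) ^ (q.1 + q.2)))) := by rw [hsplit]
                _ ≤ |w q| * (Cb * (M * (K ^ E * (ρ ^ q.1 * ρ ^ q.2)))) := by
                    refine mul_le_mul_of_nonneg_left ?_ (abs_nonneg _)
                    refine mul_le_mul_of_nonneg_left ?_ hCb
                    refine mul_le_mul_of_nonneg_left ?_ hMnn
                    exact mul_le_mul_of_nonneg_left (hKρpow q) (by positivity)
                _ = (Cb * (M * K ^ E)) * (|w q| * ρ ^ q.1 * ρ ^ q.2) := by ring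
            calc (∑ q ∈ rng, |w q * (d q * u (idx q))|)
                ≤ ∑ q ∈ rng, (Cb * (M * K ^ E)) * (|w q| * ρ ^ q.1 * ρ ^ q.2) :=
                  Finset.sum_le_sum hterm
              _ = (Cb * (M * K ^ E)) * ∑ q ∈ rng, (|w q| * ρ ^ q.1 * ρ ^ q.2) :=
                  (Finset.mul_sum _ _ _).symm
              _ ≤ (Cb * (M * K ^ E)) * SW := by
                  refine mul_le_mul_of_nonneg_left ?_ (by positivity)
                  rw [← hSW]
                  exact Summable.sum_le_tsum rng (fun q _ => by positivity) hsumw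
          have hS1b : |S1| ≤ a * (M * K ^ (m+n+1)) * SA := by
            refine hgen ac SA a (fun q => (((m - q.1 : ℕ) : ℝ) + 1))
              (fun q => (m - q.1 + 1, n - q.2)) (m+n+1) ha0.le HA rfl ?_
            intro q hqmem
            rw [hrng, Finset.mem_product, Finset.mem_range, Finset.mem_range] at hqmem
            dsimp only
            refine ⟨by positivity, ?_, by omega, by omega⟩
            rw [hadef]
            have : (m - q.1 : ℕ) ≤ m := Nat.sub_le m q.1
            exact_mod_cast Nat.succ_le_succ this
          have hS2b : |S2| ≤ b * (M * K ^ (m+n+1)) * SB := by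
            refine hgen bc SB b (fun q => (((n - q.2 : ℕ) : ℝ) + 1))
              (fun q => (m - q.1, n - q.2 + 1)) (m+n+1) hb0.le HB rfl ?_
            intro q hqmem
            rw [hrng, Finset.mem_product, Finset.mem_range, Finset.mem_range] at hqmem
            dsimp only
            refine ⟨by positivity, ?_, by omega, by omega⟩
            rw [hbdef]
            have : (n - q.2 : ℕ) ≤ n := Nat.sub_le n q.2
            exact_mod_cast Nat.succ_le_succ this
          have hS3b : |S3| ≤ 1 * (M * K ^ (m+n)) * SC := by
            have hS3' : S3 = ∑ q ∈ rng, cc q * ((1:ℝ) * u (m - q.1, n - q.2)) := by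
              rw [hS3def]
              exact Finset.sum_congr rfl (fun q _ => by ring)
            rw [hS3']
            refine hgen cc SC 1 (fun _ => (1:ℝ)) (fun q => (m - q.1, n - q.2)) (m+n)
              zero_le_one HC rfl ?_
            intro q hqmem
            rw [hrng, Finset.mem_product, Finset.mem_range, Finset.mem_range] at hqmem
            dsimp only
            exact ⟨zero_le_one, le_refl 1, by omega, by omega⟩
          -- combine
          have hKml : M * K ^ (m+n) ≤ M * K ^ (m+n+1) :=
            mul_le_mul_of_nonneg_left (pow_le_pow_right₀ hK1 (Nat.le_succ _)) hMnn
          have hS3b' : |S3| ≤ M * K ^ (m+n+1) * SC := by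
            rw [one_mul] at hS3b
            exact hS3b.trans (mul_le_mul_of_nonneg_right hKml hSCnn)
          have hT : |S1 + S2 + S3| ≤ (a * b) * (M * K ^ ((m+1) + (n+1))) := by
            have h0 := abs_add_three S1 S2 S3
            have hpre : |S1| + |S2| + |S3|
                ≤ a * (M * K ^ (m+n+1)) * SA + b * (M * K ^ (m+n+1)) * SB
                  + M * K ^ (m+n+1) * SC := by
              exact add_le_add (add_le_add hS1b hS2b) hS3b'
            refine (h0.trans hpre).trans ?_
            set Q := M * K ^ (m+n+1) with hQdef
            have hQnn : 0 ≤ Q := by positivity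
            have e1 : a * Q * SA ≤ (a*b) * (Q * SA) := by
              have : a * Q * SA = a * (Q * SA) := by ring
              rw [this]
              refine mul_le_mul_of_nonneg_right ?_ (by positivity)
              exact le_mul_of_one_le_right ha0.le hb1
            have e2 : b * Q * SB ≤ (a*b) * (Q * SB) := by
              have h' : b * Q * SB = b * (Q * SB) := by ring
              rw [h']
              refine mul_le_mul_of_nonneg_right ?_ (by positivity)
              calc b = 1 * b := (one_mul b).symm
                _ ≤ a * b := mul_le_mul_of_nonneg_right ha1 hb0.le
            have e3 : Q * SC ≤ (a*b) * (Q * SC) := by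
              refine le_mul_of_one_le_left (by positivity) ?_
              calc (1:ℝ) = 1 * 1 := (one_mul 1).symm
                _ ≤ a * b := mul_le_mul ha1 hb1 zero_le_one ha0.le
            have hsum3 : a * Q * SA + b * Q * SB + Q * SC
                ≤ (a*b) * (Q * (SA + SB + SC)) := by
              have := add_le_add (add_le_add e1 e2) e3
              calc a * Q * SA + b * Q * SB + Q * SC
                  ≤ (a*b) * (Q * SA) + (a*b) * (Q * SB) + (a*b) * (Q * SC) := this
                _ = (a*b) * (Q * (SA + SB + SC)) := by ring
            refine hsum3.trans ?_
            refine mul_le_mul_of_nonneg_left ?_ (by positivity)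
            have hfin : Q * (SA + SB + SC) ≤ Q * K := by
              refine mul_le_mul_of_nonneg_left ?_ hQnn
              linarith [hKS]
            refine hfin.trans ?_
            have : Q * K = M * K ^ ((m+1) + (n+1)) := by
              rw [hQdef]
              have hexp : (m+1) + (n+1) = (m+n+1) + 1 := by omega
              rw [hexp]; ring
            rw [this]
          -- conclude
          have hfinal : |u (m+1, n+1)| ≤ M * K ^ ((m+1) + (n+1)) := by
            rw [heq, abs_mul, abs_neg, abs_inv, abs_of_pos (by positivity : 0 < a * b)]
            rw [inv_mul_le_iff₀ (by positivity : 0 < a * b)]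
            exact hT.trans (le_refl _)
          simpa using hfinal
  intro q
  exact main (q.1 + q.2) q rfl

end recursion

section extraction

open scoped NNReal ENNReal

lemma exists_coeffs1 {f : ℝ → ℝ} {x₀ : ℝ} (hf : AnalyticAt ℝ f x₀) :
    ∃ (fc : ℕ → ℝ) (ρ : ℝ), 0 < ρ ∧ Summable (fun k => |fc k| * ρ ^ k) ∧
      fc 0 = f x₀ ∧ ∀ X : ℝ, |X| ≤ ρ → HasSum (fun k => fc k * X ^ k) (f (x₀ + X)) := by
  obtain ⟨p, hp⟩ := hf
  obtain ⟨r, hpr⟩ := hp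
  obtain ⟨s, hs0, hsr⟩ := ENNReal.lt_iff_exists_nnreal_btwn.1 hpr.r_pos
  have hs0' : 0 < s := by exact_mod_cast hs0
  set s2 : ℝ≥0 := s / 2 with hs2
  have hs2pos : 0 < s2 := by positivity
  have hs2s : s2 < s := by
    rw [hs2]
    exact NNReal.half_lt_self hs0'.ne'
  have hs2rad : (s2 : ℝ≥0∞) < p.radius := by
    refine lt_of_lt_of_le ?_ hpr.r_le
    exact lt_trans (by exact_mod_cast hs2s) hsr
  have hsumm : Summable (fun k => ‖p k‖ * (s2 : ℝ) ^ k) := by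
    have := p.summable_norm_mul_pow hs2rad
    simpa using this
  refine ⟨fun k => p.coeff k, (s2 : ℝ), by exact_mod_cast hs2pos, ?_, ?_, ?_⟩
  · refine hsumm.of_nonneg_of_le (fun k => by positivity) (fun k => ?_)
    have h1 : |p.coeff k| ≤ ‖p k‖ := by
      calc |p.coeff k| = ‖p k (fun _ => (1:ℝ))‖ := by rw [Real.norm_eq_abs]; rfl
        _ ≤ ‖p k‖ * ∏ _i : Fin k, ‖(1:ℝ)‖ := (p k).le_opNorm _
        _ = ‖p k‖ := by simp
    have : (0:ℝ) ≤ (s2:ℝ) := s2.2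
    have h2 : (0:ℝ) ≤ (s2:ℝ) ^ k := by positivity
    exact mul_le_mul_of_nonneg_right h1 h2
  · exact hpr.coeff_zero (fun _ => 1)

  · intro X hX
    have hmem : X ∈ EMetric.ball (0:ℝ) r := by
      show edist X (0:ℝ) < r
      rw [edist_zero_right]
      have h1 : ‖X‖₊ ≤ s2 := by
        rw [← NNReal.coe_le_coe, coe_nnnorm, Real.norm_eq_abs]
        exact hX
      calc (‖X‖₊ : ℝ≥0∞) ≤ (s2 : ℝ≥0∞) := by exact_mod_cast h1
        _ < (s : ℝ≥0∞) := by exact_mod_cast hs2s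
        _ < r := hsr
    have hsum := hpr.hasSum hmem
    have hfn : (fun n => (p n) fun _ => X) = (fun k => p.coeff k * X ^ k) := by
      funext n
      rw [FormalMultilinearSeries.apply_eq_pow_smul_coeff, smul_eq_mul, mul_comm]
    rw [hfn] at hsum
    exact hsum

/-- basis vectors of `ℝ × ℝ` -/
def bv : Fin 2 → ℝ × ℝ := ![(1,0),(0,1)]

lemma norm_bv (j : Fin 2) : ‖bv j‖ = 1 := by
  fin_cases j <;> simp [bv, Prod.norm_def]

lemma exists_coeffs2 {f : ℝ × ℝ → ℝ} {c : ℝ × ℝ} (hf : AnalyticAt ℝ f c) :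
    ∃ (fc : ℕ × ℕ → ℝ) (ρ : ℝ), 0 < ρ ∧ SummableAt fc ρ ∧
      ∀ X Y : ℝ, |X| ≤ ρ → |Y| ≤ ρ → G fc X Y = f (c.1 + X, c.2 + Y) := by
  classical
  obtain ⟨p, hp⟩ := hf
  obtain ⟨r, hpr⟩ := hp
  obtain ⟨s, hs0, hsr⟩ := ENNReal.lt_iff_exists_nnreal_btwn.1 hpr.r_pos
  have hs0' : 0 < s := by exact_mod_cast hs0
  set s2 : ℝ≥0 := s / 2 with hs2
  have hs2pos : 0 < s2 := by positivity
  have hs2s : s2 < s := NNReal.half_lt_self hs0'.ne'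
  have hs2rad : (s2 : ℝ≥0∞) < p.radius := by
    refine lt_of_lt_of_le ?_ hpr.r_le
    exact lt_trans (by exact_mod_cast hs2s) hsr
  have hsumm : Summable (fun k => ‖p k‖ * (s2 : ℝ) ^ k) := by
    have := p.summable_norm_mul_pow hs2rad
    simpa using this
  set ρ : ℝ := (s : ℝ) / 8 with hρdef
  have hρpos : 0 < ρ := by positivity
  -- the coefficients
  set A : ∀ k : ℕ, ℕ → ℝ := fun k m =>
    ∑ t ∈ Finset.univ.filter (fun t : Fin k → Fin 2 =>
        (Finset.univ.filter (fun i => t i = 0)).card = m), p k (fun i => bv (t i)) with hA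
  set fc : ℕ × ℕ → ℝ := fun q => A (q.1 + q.2) q.1 with hfc
  -- norm bound for each p k (bv ∘ t)
  have hpt : ∀ k (t : Fin k → Fin 2), |p k (fun i => bv (t i))| ≤ ‖p k‖ := by
    intro k t
    calc |p k (fun i => bv (t i))| = ‖p k (fun i => bv (t i))‖ := (Real.norm_eq_abs _).symm
      _ ≤ ‖p k‖ * ∏ i : Fin k, ‖bv (t i)‖ := (p k).le_opNorm _
      _ = ‖p k‖ := by simp [norm_bv]
  have hAbound : ∀ k m, |A k m| ≤ (2:ℝ) ^ k * ‖p k‖ := by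
    intro k m
    rw [hA]
    refine (Finset.abs_sum_le_sum_abs _ _).trans ?_
    calc (∑ t ∈ Finset.univ.filter (fun t : Fin k → Fin 2 =>
            (Finset.univ.filter (fun i => t i = 0)).card = m), |p k (fun i => bv (t i))|)
        ≤ ∑ _t ∈ Finset.univ.filter (fun t : Fin k → Fin 2 =>
            (Finset.univ.filter (fun i => t i = 0)).card = m), ‖p k‖ :=
          Finset.sum_le_sum (fun t _ => hpt k t)
      _ = ((Finset.univ.filter (fun t : Fin k → Fin 2 =>
            (Finset.univ.filter (fun i => t i = 0)).card = m)).card : ℝ) * ‖p k‖ := by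
          rw [Finset.sum_const, nsmul_eq_mul]
      _ ≤ (2:ℝ) ^ k * ‖p k‖ := by
          refine mul_le_mul_of_nonneg_right ?_ (norm_nonneg _)
          have h1 : (Finset.univ.filter (fun t : Fin k → Fin 2 =>
              (Finset.univ.filter (fun i => t i = 0)).card = m)).card
              ≤ (Finset.univ : Finset (Fin k → Fin 2)).card := Finset.card_filter_le _ _
          have h2 : (Finset.univ : Finset (Fin k → Fin 2)).card = 2 ^ k := by
            simp [Finset.card_univ]
          rw [h2] at h1
          exact_mod_cast h1
  -- summability
  have hsummable : SummableAt fc ρ := by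
    refine summable_of_diag_bound (h := fun k => (2:ℝ) ^ k * ‖p k‖ * ρ ^ k) ?_ ?_
    · intro q
      have h0 : |(|fc q| * ρ ^ q.1 * ρ ^ q.2)| = |fc q| * ρ ^ q.1 * ρ ^ q.2 := by
        rw [abs_of_nonneg]; positivity
      rw [h0]
      have h1 : |fc q| ≤ (2:ℝ) ^ (q.1 + q.2) * ‖p (q.1 + q.2)‖ := hAbound _ _
      calc |fc q| * ρ ^ q.1 * ρ ^ q.2 = |fc q| * ρ ^ (q.1 + q.2) := by rw [pow_add]; ring
        _ ≤ (2:ℝ) ^ (q.1 + q.2) * ‖p (q.1 + q.2)‖ * ρ ^ (q.1 + q.2) :=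
          mul_le_mul_of_nonneg_right h1 (by positivity)
    · obtain ⟨D, hD0, hD⟩ := exists_geom_bound (x := (1:ℝ)/2) (by norm_num) (by norm_num)
      refine (hsumm.mul_left D).of_nonneg_of_le (fun k => ?_) (fun k => ?_)
      · positivity
      · have key : ((k:ℝ) + 1) * ((2:ℝ) ^ k * ρ ^ k) ≤ D * (s2 : ℝ) ^ k := by
          have h1 : ((k:ℝ)+1) * ((1:ℝ)/2) ^ k ≤ D := hD k
          have h2 : (2:ℝ) ^ k * ρ ^ k = ((s:ℝ)/4) ^ k := by
            rw [← mul_pow, hρdef]; congr 1; ring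
          have h3 : ((s:ℝ)/4) ^ k = ((1:ℝ)/2) ^ k * ((s:ℝ)/2) ^ k := by
            rw [← mul_pow]; congr 1; ring
          have h4 : ((s2:ℝ)) ^ k = ((s:ℝ)/2) ^ k := by
            rw [hs2]; push_cast; ring_nf
          rw [h2, h3, h4]
          have h5 : (0:ℝ) ≤ ((s:ℝ)/2) ^ k := by positivity
          calc ((k:ℝ)+1) * (((1:ℝ)/2) ^ k * ((s:ℝ)/2) ^ k)
              = (((k:ℝ)+1) * ((1:ℝ)/2) ^ k) * ((s:ℝ)/2) ^ k := by ring
            _ ≤ D * ((s:ℝ)/2) ^ k := mul_le_mul_of_nonneg_right h1 h5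
        calc ((k:ℝ)+1) * ((2:ℝ) ^ k * ‖p k‖ * ρ ^ k)
            = (((k:ℝ)+1) * ((2:ℝ) ^ k * ρ ^ k)) * ‖p k‖ := by ring
          _ ≤ (D * (s2:ℝ) ^ k) * ‖p k‖ := by
              refine mul_le_mul_of_nonneg_right key (norm_nonneg _)
          _ = D * (‖p k‖ * (s2:ℝ) ^ k) := by ring
  -- finite expansion of p k on the diagonal
  have hexp : ∀ (k : ℕ) (X Y : ℝ), (p k fun _ => (X, Y))
      = ∑ m ∈ range (k+1), fc (m, k - m) * X ^ m * Y ^ (k - m) := by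
    intro k X Y
    set cf : Fin 2 → ℝ := ![X, Y] with hcf
    have hw : (fun _ : Fin k => (X, Y)) = (fun _ : Fin k => ∑ j : Fin 2, cf j • bv j) := by
      funext i
      simp [hcf, bv, Fin.sum_univ_two, Prod.ext_iff]
    rw [hw]
    have h1 := (p k).toMultilinearMap.map_sum (fun (_ : Fin k) (j : Fin 2) => cf j • bv j)
    have h1' : (p k fun _ : Fin k => ∑ j : Fin 2, cf j • bv j)
        = ∑ t : Fin k → Fin 2, p k (fun i => cf (t i) • bv (t i)) := h1
    rw [h1']
    have h2 : ∀ t : Fin k → Fin 2, (p k fun i => cf (t i) • bv (t i))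
        = (∏ i : Fin k, cf (t i)) • p k (fun i => bv (t i)) := fun t =>
      (p k).toMultilinearMap.map_smul_univ (fun i => cf (t i)) (fun i => bv (t i))
    have h3 : ∀ t : Fin k → Fin 2, (∏ i : Fin k, cf (t i))
        = X ^ (Finset.univ.filter (fun i => t i = 0)).card
          * Y ^ (k - (Finset.univ.filter (fun i => t i = 0)).card) := by
      intro t
      have hcfj : ∀ j : Fin 2, cf j = if j = 0 then X else Y := by
        intro j; fin_cases j <;> simp [hcf]
      calc (∏ i : Fin k, cf (t i)) = ∏ i : Fin k, (if t i = 0 then X else Y) :=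
            Finset.prod_congr rfl (fun i _ => hcfj (t i))
        _ = X ^ (Finset.univ.filter (fun i => t i = 0)).card
            * Y ^ (Finset.univ.filter (fun i => ¬ t i = 0)).card := by
            rw [Finset.prod_ite]
            simp [Finset.prod_const]
        _ = X ^ (Finset.univ.filter (fun i => t i = 0)).card
            * Y ^ (k - (Finset.univ.filter (fun i => t i = 0)).card) := by
            congr 2
            have := Finset.card_filter_add_card_filter_not
              (s := (Finset.univ : Finset (Fin k))) (fun i => t i = 0)
            simp only [Finset.card_univ, Fintype.card_fin] at this
            omega
    -- group by the cardinality
    have hmaps : ∀ t : Fin k → Fin 2, t ∈ (Finset.univ : Finset (Fin k → Fin 2)) →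
        (Finset.univ.filter (fun i => t i = 0)).card ∈ range (k+1) := by
      intro t _
      rw [Finset.mem_range]
      have := Finset.card_filter_le (Finset.univ : Finset (Fin k)) (fun i => t i = 0)
      simp only [Finset.card_univ, Fintype.card_fin] at this
      omega
    rw [← Finset.sum_fiberwise_of_maps_to hmaps
      (fun t => p k (fun i => cf (t i) • bv (t i)))]
    refine Finset.sum_congr rfl (fun m hm => ?_)
    calc (∑ t ∈ Finset.univ.filter (fun t : Fin k → Fin 2 =>
            (Finset.univ.filter (fun i => t i = 0)).card = m),
          p k (fun i => cf (t i) • bv (t i)))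
        = ∑ t ∈ Finset.univ.filter (fun t : Fin k → Fin 2 =>
            (Finset.univ.filter (fun i => t i = 0)).card = m),
          X ^ m * Y ^ (k - m) * p k (fun i => bv (t i)) := by
          refine Finset.sum_congr rfl (fun t ht => ?_)
          rw [Finset.mem_filter] at ht
          rw [h2 t, h3 t, ht.2, smul_eq_mul]
      _ = X ^ m * Y ^ (k - m) * A k m := by
          rw [hA, ← Finset.mul_sum]
      _ = fc (m, k - m) * X ^ m * Y ^ (k - m) := by
          rw [hfc]
          have hmk : m + (k - m) = k := by
            rw [Finset.mem_range] at hm; omega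
          dsimp only
          rw [hmk]
          ring
  refine ⟨fc, ρ, hρpos, hsummable, ?_⟩
  intro X Y hX hY
  have hmem : (X, Y) ∈ EMetric.ball (0 : ℝ × ℝ) r := by
    show edist (X, Y) (0:ℝ × ℝ) < r
    rw [edist_zero_right]
    have h1 : ‖(X, Y)‖₊ ≤ s2 := by
      rw [← NNReal.coe_le_coe, coe_nnnorm, Prod.norm_def]
      have hρs2 : ρ ≤ (s2 : ℝ) := by
        rw [hρdef, hs2]
        push_cast
        have : (0:ℝ) ≤ (s:ℝ) := s.2
        linarith
      simp only [Real.norm_eq_abs, sup_le_iff]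
      exact ⟨hX.trans hρs2, hY.trans hρs2⟩
    calc (‖(X, Y)‖₊ : ℝ≥0∞) ≤ (s2 : ℝ≥0∞) := by exact_mod_cast h1
      _ < (s : ℝ≥0∞) := by exact_mod_cast hs2s
      _ < r := hsr
  have hps := hpr.hasSum hmem
  have hGsum : HasSum (mono fc X Y) (G fc X Y) :=
    (hsummable.summable_mono hX hY).hasSum
  have hfib := hasSum_fiberwise_finset hGsum (fun q => q.1 + q.2)
    (fun k => Finset.HasAntidiagonal.antidiagonal k) (fun x b => Finset.HasAntidiagonal.mem_antidiagonal)
  have hagree : (fun k => ∑ z ∈ Finset.HasAntidiagonal.antidiagonal k, mono fc X Y z)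
      = (fun k => p k fun _ => (X, Y)) := by
    funext k
    rw [Finset.Nat.sum_antidiagonal_eq_sum_range_succ_mk, hexp k X Y]
    rfl
  rw [hagree] at hfib
  have := hfib.unique hps
  rw [this]
  rfl

end extraction

section analytic
open scoped NNReal ENNReal

/-- the multilinear monomial map on `ℝ × ℝ`: product of the first `m` first-coordinates
and `k - m` second-coordinates. -/
noncomputable def monCM (k m : ℕ) : ContinuousMultilinearMap ℝ (fun _ : Fin k => ℝ × ℝ) ℝ :=
  (ContinuousMultilinearMap.mkPiAlgebra ℝ (Fin k) ℝ).compContinuousLinearMap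
    (fun i => if (i : ℕ) < m then ContinuousLinearMap.fst ℝ ℝ ℝ
      else ContinuousLinearMap.snd ℝ ℝ ℝ)

lemma prod_ite_pow {k m : ℕ} (hm : m ≤ k) (A B : ℝ) :
    (∏ i : Fin k, (if (i : ℕ) < m then A else B)) = A ^ m * B ^ (k - m) := by
  classical
  rw [Fin.prod_univ_eq_prod_range (fun i => if i < m then A else B) k]
  rw [Finset.prod_ite]
  have h1 : (range k).filter (fun i => i < m) = range m := by
    ext i
    simp only [Finset.mem_filter, Finset.mem_range]
    omega
  have h2 : ((range k).filter (fun i => ¬ i < m)).card = k - m := by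
    have h3 := Finset.card_filter_add_card_filter_not
      (s := range k) (fun i => i < m)
    rw [h1] at h3
    simp only [Finset.card_range] at h3
    omega
  rw [h1, Finset.prod_const, Finset.prod_const, Finset.card_range, h2]

lemma monCM_apply (k m : ℕ) (hm : m ≤ k) (w : ℝ × ℝ) :
    monCM k m (fun _ => w) = w.1 ^ m * w.2 ^ (k - m) := by
  rw [monCM, ContinuousMultilinearMap.compContinuousLinearMap_apply,
    ContinuousMultilinearMap.mkPiAlgebra_apply]
  rw [Finset.prod_congr rfl (fun i _ => ?_), prod_ite_pow hm w.1 w.2]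
  exact apply_ite (fun g : ℝ × ℝ →L[ℝ] ℝ => g w) ((i : ℕ) < m) _ _

lemma monCM_norm (k m : ℕ) : ‖monCM k m‖ ≤ 1 := by
  refine (ContinuousMultilinearMap.opNorm_le_iff zero_le_one).2 (fun vv => ?_)
  rw [one_mul, monCM, ContinuousMultilinearMap.compContinuousLinearMap_apply,
    ContinuousMultilinearMap.mkPiAlgebra_apply]
  rw [Real.norm_eq_abs, Finset.abs_prod]
  refine Finset.prod_le_prod (fun i _ => abs_nonneg _) (fun i _ => ?_)
  split
  · calc |(ContinuousLinearMap.fst ℝ ℝ ℝ) (vv i)| = |(vv i).1| := rfl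
      _ ≤ ‖vv i‖ := by
        rw [Prod.norm_def, Real.norm_eq_abs, Real.norm_eq_abs]
        exact le_max_left _ _
  · calc |(ContinuousLinearMap.snd ℝ ℝ ℝ) (vv i)| = |(vv i).2| := rfl
      _ ≤ ‖vv i‖ := by
        rw [Prod.norm_def, Real.norm_eq_abs, Real.norm_eq_abs]
        exact le_max_right _ _

lemma analyticAt_G {v : ℕ × ℕ → ℝ} {R : ℝ} (hv : SummableAt v R) (hR : 0 < R) (c : ℝ × ℝ) :
    ∀ p : ℝ × ℝ, dist p c < R →
      AnalyticAt ℝ (fun p : ℝ × ℝ => G v (p.1 - c.1) (p.2 - c.2)) p := by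
  classical
  set P : FormalMultilinearSeries ℝ (ℝ × ℝ) ℝ :=
    fun k => ∑ m ∈ range (k+1), v (m, k - m) • monCM k m with hPdef
  have hnorm : ∀ k, ‖P k‖ ≤ ∑ m ∈ range (k+1), |v (m, k - m)| := by
    intro k
    rw [hPdef]
    refine (norm_sum_le _ _).trans ?_
    refine Finset.sum_le_sum (fun m _ => ?_)
    refine (norm_smul_le (v (m, k - m)) (monCM k m)).trans ?_
    rw [Real.norm_eq_abs]
    calc |v (m, k - m)| * ‖monCM k m‖ ≤ |v (m, k - m)| * 1 :=
        mul_le_mul_of_nonneg_left (monCM_norm k m) (abs_nonneg _)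
      _ = |v (m, k - m)| := mul_one _
  have hdiag : HasSum (fun k => ∑ z ∈ Finset.HasAntidiagonal.antidiagonal k,
      (|v z| * R ^ z.1 * R ^ z.2)) (∑' q : ℕ × ℕ, |v q| * R ^ q.1 * R ^ q.2) :=
    hasSum_fiberwise_finset hv.hasSum (fun q => q.1 + q.2)
      (fun k => Finset.HasAntidiagonal.antidiagonal k) (fun x b => Finset.HasAntidiagonal.mem_antidiagonal)
  have hdiag' : ∀ k : ℕ, (∑ z ∈ Finset.HasAntidiagonal.antidiagonal k, (|v z| * R ^ z.1 * R ^ z.2))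
      = (∑ m ∈ range (k+1), |v (m, k - m)|) * R ^ k := by
    intro k
    rw [Finset.Nat.sum_antidiagonal_eq_sum_range_succ_mk, Finset.sum_mul]
    refine Finset.sum_congr rfl (fun m hm => ?_)
    rw [Finset.mem_range] at hm
    have : R ^ m * R ^ (k - m) = R ^ k := by rw [← pow_add]; congr 1; omega
    calc |v (m, k - m)| * R ^ m * R ^ (k - m) = |v (m, k - m)| * (R ^ m * R ^ (k - m)) := by ring
      _ = |v (m, k - m)| * R ^ k := by rw [this]
  have hsumm' : Summable (fun k => (∑ m ∈ range (k+1), |v (m, k - m)|) * R ^ k) := by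
    refine Summable.congr hdiag.summable (fun k => hdiag' k)
  have hball : HasFPowerSeriesOnBall
      (fun p : ℝ × ℝ => G v (p.1 - c.1) (p.2 - c.2)) P c (ENNReal.ofReal R) := by
    constructor
    · -- radius
      rw [ENNReal.ofReal_eq_coe_nnreal hR.le]
      refine P.le_radius_of_summable_norm ?_
      refine hsumm'.of_nonneg_of_le (fun k => by positivity) (fun k => ?_)
      have h1 := hnorm k
      have h2 : ((⟨R, hR.le⟩ : ℝ≥0) : ℝ) ^ k = R ^ k := rfl
      rw [h2]
      refine mul_le_mul_of_nonneg_right h1 (by positivity)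
    · exact ENNReal.ofReal_pos.2 hR
    · intro w hw
      rw [Metric.emetric_ball, Metric.mem_ball, dist_zero_right] at hw
      have hw1 : |w.1| ≤ R := by
        rw [Prod.norm_def] at hw
        have := le_max_left ‖w.1‖ ‖w.2‖
        rw [Real.norm_eq_abs] at this
        linarith [this.trans hw.le]
      have hw2 : |w.2| ≤ R := by
        rw [Prod.norm_def] at hw
        have := le_max_right ‖w.1‖ ‖w.2‖
        rw [Real.norm_eq_abs] at this
        linarith [this.trans hw.le]
      have hGsum : HasSum (mono v w.1 w.2) (G v w.1 w.2) :=
        (hv.summable_mono hw1 hw2).hasSum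
      have hfib := hasSum_fiberwise_finset hGsum (fun q => q.1 + q.2)
        (fun k => Finset.HasAntidiagonal.antidiagonal k) (fun x b => Finset.HasAntidiagonal.mem_antidiagonal)
      have hagree : (fun k => ∑ z ∈ Finset.HasAntidiagonal.antidiagonal k, mono v w.1 w.2 z)
          = (fun k => P k fun _ => w) := by
        funext k
        rw [Finset.Nat.sum_antidiagonal_eq_sum_range_succ_mk, hPdef]
        rw [ContinuousMultilinearMap.sum_apply]
        refine Finset.sum_congr rfl (fun m hm => ?_)
        rw [Finset.mem_range] at hm
        rw [ContinuousMultilinearMap.smul_apply, monCM_apply k m (by omega) w, smul_eq_mul]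
        simp only [mono]
        ring
      rw [hagree] at hfib
      have hcw : ((c + w).1 - c.1) = w.1 := by simp
      have hcw2 : ((c + w).2 - c.2) = w.2 := by simp
      simpa [hcw, hcw2] using hfib
  intro p hp
  refine hball.analyticAt_of_mem ?_
  rw [Metric.emetric_ball, Metric.mem_ball]
  exact hp

end analytic
end GoursatAux




/-- Partial derivative in the first variable. -/
noncomputable def pdx (f : ℝ × ℝ → ℝ) (p : ℝ × ℝ) : ℝ :=
  deriv (fun x => f (x, p.2)) p.1

/-- Partial derivative in the second variable. -/
noncomputable def pdy (f : ℝ × ℝ → ℝ) (p : ℝ × ℝ) : ℝ :=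
  deriv (fun y => f (p.1, y)) p.2

/-- Mixed second partial derivative `∂²f/∂x∂y` (first in `x`, then in `y`). -/
noncomputable def pdxy (f : ℝ × ℝ → ℝ) (p : ℝ × ℝ) : ℝ :=
  pdy (fun q => pdx f q) p

/-- **Goursat (characteristic initial-value) problem for the analytic canonical
hyperbolic equation**: if `a`, `b`, `c` are real-analytic at `(x₀, y₀)`, `φ` is
real-analytic at `x₀`, `ψ` is real-analytic at `y₀`, and `φ x₀ = ψ y₀`, then on some
open neighbourhood `U` of `(x₀, y₀)` there is a real-analytic solution `z` of
`∂²z/∂x∂y + a ∂z/∂x + b ∂z/∂y + c z = 0` with `z(x, y₀) = φ x` and `z(x₀, y) = ψ y`. -/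
theorem goursat_analytic_existence
    (a b c : ℝ × ℝ → ℝ) (φ ψ : ℝ → ℝ) (x₀ y₀ : ℝ)
    (ha : AnalyticAt ℝ a (x₀, y₀)) (hb : AnalyticAt ℝ b (x₀, y₀))
    (hc : AnalyticAt ℝ c (x₀, y₀))
    (hφ : AnalyticAt ℝ φ x₀) (hψ : AnalyticAt ℝ ψ y₀)
    (hcompat : φ x₀ = ψ y₀) :
    ∃ U : Set (ℝ × ℝ), IsOpen U ∧ (x₀, y₀) ∈ U ∧
      ∃ z : ℝ × ℝ → ℝ,
        (∀ p ∈ U, AnalyticAt ℝ z p) ∧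
        (∀ p ∈ U, pdxy z p + a p * pdx z p + b p * pdy z p + c p * z p = 0) ∧
        (∀ x : ℝ, (x, y₀) ∈ U → z (x, y₀) = φ x) ∧
        (∀ y : ℝ, (x₀, y) ∈ U → z (x₀, y) = ψ y) := by
  classical
  obtain ⟨ac, ρa, hρa, HA0, HAeq⟩ := GoursatAux.exists_coeffs2 ha
  obtain ⟨bc, ρb, hρb, HB0, HBeq⟩ := GoursatAux.exists_coeffs2 hb
  obtain ⟨cc, ρc, hρc, HC0, HCeq⟩ := GoursatAux.exists_coeffs2 hc
  obtain ⟨φc, ρφ, hρφ, HΦ0, hφ0, HΦeq⟩ := GoursatAux.exists_coeffs1 hφ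
  obtain ⟨ψc, ρψ, hρψ, HΨ0, hψ0, HΨeq⟩ := GoursatAux.exists_coeffs1 hψ
  set ρ : ℝ := min (min ρa ρb) (min ρc (min ρφ ρψ)) with hρdef
  have hρ : 0 < ρ := by
    rw [hρdef]
    simp only [lt_min_iff]
    exact ⟨⟨hρa, hρb⟩, hρc, hρφ, hρψ⟩
  have hρa' : ρ ≤ ρa := le_trans (min_le_left _ _) (min_le_left _ _)
  have hρb' : ρ ≤ ρb := le_trans (min_le_left _ _) (min_le_right _ _)
  have hρc' : ρ ≤ ρc := le_trans (min_le_right _ _) (min_le_left _ _)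
  have hρφ' : ρ ≤ ρφ := le_trans (min_le_right _ _)
    (le_trans (min_le_right _ _) (min_le_left _ _))
  have hρψ' : ρ ≤ ρψ := le_trans (min_le_right _ _)
    (le_trans (min_le_right _ _) (min_le_right _ _))
  have HA : GoursatAux.SummableAt ac ρ := HA0.of_le hρ.le hρa'
  have HB : GoursatAux.SummableAt bc ρ := HB0.of_le hρ.le hρb'
  have HC : GoursatAux.SummableAt cc ρ := HC0.of_le hρ.le hρc'
  have HΦ : Summable (fun k => |φc k| * ρ ^ k) := by
    refine HΦ0.of_nonneg_of_le (fun k => by positivity) (fun k => ?_)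
    exact mul_le_mul_of_nonneg_left (pow_le_pow_left₀ hρ.le hρφ' k) (abs_nonneg _)
  have HΨ : Summable (fun k => |ψc k| * ρ ^ k) := by
    refine HΨ0.of_nonneg_of_le (fun k => by positivity) (fun k => ?_)
    exact mul_le_mul_of_nonneg_left (pow_le_pow_left₀ hρ.le hρψ' k) (abs_nonneg _)
  obtain ⟨M, K, hM0, hK1, hbound⟩ :=
    GoursatAux.solU_bound ac bc cc φc ψc hρ HA HB HC HΦ HΨ
  set u := GoursatAux.solU ac bc cc φc ψc with hu
  have hKpos : (0:ℝ) < K := lt_of_lt_of_le one_pos hK1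
  set R₁ : ℝ := min ρ (1 / (2 * K)) with hR₁def
  have hR₁pos : 0 < R₁ := lt_min hρ (by positivity)
  have hR₁ρ : R₁ ≤ ρ := min_le_left _ _
  have HU : GoursatAux.SummableAt u R₁ := by
    have hgeo : Summable (fun q : ℕ × ℕ => (M * ((1:ℝ)/2) ^ q.1) * ((1:ℝ)/2) ^ q.2) := by
      have h1 : Summable (fun k : ℕ => M * ((1:ℝ)/2) ^ k) :=
        (summable_geometric_of_lt_one (by norm_num) (by norm_num)).mul_left M
      have h2 : Summable (fun k : ℕ => ((1:ℝ)/2) ^ k) :=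
        summable_geometric_of_lt_one (by norm_num) (by norm_num)
      exact h1.mul_of_nonneg h2 (fun k => by positivity) (fun k => by positivity)
    refine hgeo.of_nonneg_of_le (fun q => by positivity) (fun q => ?_)
    have hKR : K * R₁ ≤ 1/2 := by
      have : R₁ ≤ 1 / (2 * K) := min_le_right _ _
      calc K * R₁ ≤ K * (1 / (2 * K)) := mul_le_mul_of_nonneg_left this hKpos.le
        _ = 1/2 := by field_simp
    have hKR0 : 0 ≤ K * R₁ := by positivity
    calc |u q| * R₁ ^ q.1 * R₁ ^ q.2
        ≤ (M * K ^ (q.1 + q.2)) * R₁ ^ q.1 * R₁ ^ q.2 := by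
          have := hbound q
          have h1 : (0:ℝ) ≤ R₁ ^ q.1 := by positivity
          have h2 : (0:ℝ) ≤ R₁ ^ q.2 := by positivity
          exact mul_le_mul_of_nonneg_right
            (mul_le_mul_of_nonneg_right this h1) h2
      _ = M * ((K * R₁) ^ q.1 * (K * R₁) ^ q.2) := by
          rw [pow_add]
          rw [mul_pow, mul_pow]
          ring
      _ ≤ M * (((1:ℝ)/2) ^ q.1 * ((1:ℝ)/2) ^ q.2) := by
          refine mul_le_mul_of_nonneg_left ?_ hM0
          refine mul_le_mul (pow_le_pow_left₀ hKR0 hKR _) (pow_le_pow_left₀ hKR0 hKR _)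
            (by positivity) (by positivity)
      _ = (M * ((1:ℝ)/2) ^ q.1) * ((1:ℝ)/2) ^ q.2 := by ring
  set R₂ : ℝ := R₁ / 2 with hR₂def
  have hR₂pos : 0 < R₂ := by positivity
  have hR₂R₁ : R₂ < R₁ := half_lt_self hR₁pos
  set R₃ : ℝ := R₂ / 2 with hR₃def
  have hR₃pos : 0 < R₃ := by positivity
  have hR₃R₂ : R₃ < R₂ := half_lt_self hR₂pos
  have hR₃R₁ : R₃ < R₁ := lt_trans hR₃R₂ hR₂R₁
  have hR₃ρ : R₃ ≤ ρ := le_trans hR₃R₁.le hR₁ρ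
  have HUx : GoursatAux.SummableAt (GoursatAux.dxc u) R₂ := HU.dxc_of hR₂pos.le hR₂R₁
  have HUy : GoursatAux.SummableAt (GoursatAux.dyc u) R₂ := HU.dyc_of hR₂pos.le hR₂R₁
  have HUxy : GoursatAux.SummableAt (GoursatAux.dyc (GoursatAux.dxc u)) R₃ :=
    HUx.dyc_of hR₃pos.le hR₃R₂
  set z : ℝ × ℝ → ℝ := fun p => GoursatAux.G u (p.1 - x₀) (p.2 - y₀) with hz
  have hmemb : ∀ p : ℝ × ℝ, p ∈ Metric.ball ((x₀ : ℝ), (y₀ : ℝ)) R₃ →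
      |p.1 - x₀| < R₃ ∧ |p.2 - y₀| < R₃ := by
    intro p hp
    rw [Metric.mem_ball, Prod.dist_eq, sup_lt_iff, Real.dist_eq, Real.dist_eq] at hp
    exact hp
  -- the x-derivative of z everywhere in the big ball
  have hdx : ∀ x' y' : ℝ, |x' - x₀| < R₁ → |y' - y₀| < R₁ →
      pdx z (x', y') = GoursatAux.G (GoursatAux.dxc u) (x' - x₀) (y' - y₀) := by
    intro x' y' h1 h2
    have hG := GoursatAux.hasDerivAt_G_x HU h1 h2
    have hcomp : HasDerivAt (fun x : ℝ => GoursatAux.G u (x - x₀) (y' - y₀))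
        (GoursatAux.G (GoursatAux.dxc u) (x' - x₀) (y' - y₀) * 1) x' := by
      have := hG.comp x' ((hasDerivAt_id x').sub_const x₀)
      simpa [Function.comp_def] using this
    have : pdx z (x', y') = deriv (fun x : ℝ => GoursatAux.G u (x - x₀) (y' - y₀)) x' := rfl
    rw [this, hcomp.deriv, mul_one]
  have hdy : ∀ x' y' : ℝ, |x' - x₀| < R₁ → |y' - y₀| < R₁ →
      pdy z (x', y') = GoursatAux.G (GoursatAux.dyc u) (x' - x₀) (y' - y₀) := by
    intro x' y' h1 h2
    have hG := GoursatAux.hasDerivAt_G_y HU h1 h2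
    have hcomp : HasDerivAt (fun y : ℝ => GoursatAux.G u (x' - x₀) (y - y₀))
        (GoursatAux.G (GoursatAux.dyc u) (x' - x₀) (y' - y₀) * 1) y' := by
      have := hG.comp y' ((hasDerivAt_id y').sub_const y₀)
      simpa [Function.comp_def] using this
    have : pdy z (x', y') = deriv (fun y : ℝ => GoursatAux.G u (x' - x₀) (y - y₀)) y' := rfl
    rw [this, hcomp.deriv, mul_one]
  refine ⟨Metric.ball (x₀, y₀) R₃, Metric.isOpen_ball, Metric.mem_ball_self hR₃pos, z,
    ?_, ?_, ?_, ?_⟩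
  · -- analyticity
    intro p hp
    rw [Metric.mem_ball] at hp
    exact GoursatAux.analyticAt_G HU hR₁pos (x₀, y₀) p (lt_of_lt_of_le hp hR₃R₁.le)
  · -- the PDE
    intro p hp
    obtain ⟨hX3, hY3⟩ := hmemb p hp
    set X := p.1 - x₀ with hXdef
    set Y := p.2 - y₀ with hYdef
    have hX1 : |X| < R₁ := lt_trans hX3 hR₃R₁
    have hY1 : |Y| < R₁ := lt_trans hY3 hR₃R₁
    have hX2 : |X| < R₂ := lt_trans hX3 hR₃R₂
    have hY2 : |Y| < R₂ := lt_trans hY3 hR₃R₂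
    have hXρ : |X| ≤ ρ := le_trans hX3.le hR₃ρ
    have hYρ : |Y| ≤ ρ := le_trans hY3.le hR₃ρ
    -- pdxy
    have hpdx_ev : (fun y' => pdx z (p.1, y'))
        =ᶠ[nhds p.2] (fun y' => GoursatAux.G (GoursatAux.dxc u) X (y' - y₀)) := by
      have hball : Metric.ball y₀ R₁ ∈ nhds p.2 := by
        refine Metric.isOpen_ball.mem_nhds ?_
        rw [Metric.mem_ball, Real.dist_eq]
        exact hY1
      filter_upwards [hball] with y' hy'
      rw [Metric.mem_ball, Real.dist_eq] at hy'
      exact hdx p.1 y' hX1 hy'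
    have hdxy : pdxy z p = GoursatAux.G (GoursatAux.dyc (GoursatAux.dxc u)) X Y := by
      have h0 : pdxy z p = deriv (fun y' => pdx z (p.1, y')) p.2 := rfl
      rw [h0, hpdx_ev.deriv_eq]
      have hG := GoursatAux.hasDerivAt_G_y HUx hX2 hY2
      have hcomp : HasDerivAt (fun y : ℝ => GoursatAux.G (GoursatAux.dxc u) X (y - y₀))
          (GoursatAux.G (GoursatAux.dyc (GoursatAux.dxc u)) X Y * 1) p.2 := by
        have := hG.comp p.2 ((hasDerivAt_id p.2).sub_const y₀)
        simpa [Function.comp_def] using this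
      rw [hcomp.deriv, mul_one]
    -- values of the coefficient functions
    have hpeq : ((x₀ : ℝ) + X, (y₀ : ℝ) + Y) = p := by
      rw [hXdef, hYdef]
      exact Prod.ext (by ring) (by ring)
    have ha' : a p = GoursatAux.G ac X Y := by
      have := HAeq X Y (hXρ.trans hρa') (hYρ.trans hρa')
      rw [← hpeq]
      exact this.symm
    have hb' : b p = GoursatAux.G bc X Y := by
      have := HBeq X Y (hXρ.trans hρb') (hYρ.trans hρb')
      rw [← hpeq]
      exact this.symm
    have hc' : c p = GoursatAux.G cc X Y := by
      have := HCeq X Y (hXρ.trans hρc') (hYρ.trans hρc')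
      rw [← hpeq]
      exact this.symm
    -- products as convolutions (all at radius R₂ ≤ ρ)
    have hR₂ρ : R₂ ≤ ρ := le_trans hR₂R₁.le hR₁ρ
    have HA2 : GoursatAux.SummableAt ac R₂ := HA.of_le hR₂pos.le hR₂ρ
    have HB2 : GoursatAux.SummableAt bc R₂ := HB.of_le hR₂pos.le hR₂ρ
    have HC2 : GoursatAux.SummableAt cc R₂ := HC.of_le hR₂pos.le hR₂ρ
    have HU2 : GoursatAux.SummableAt u R₂ := HU.of_le hR₂pos.le hR₂R₁.le
    have hconvA := GoursatAux.hasSum_conv HA2 HUx hX2.le hY2.le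
    have hconvB := GoursatAux.hasSum_conv HB2 HUy hX2.le hY2.le
    have hconvC := GoursatAux.hasSum_conv HC2 HU2 hX2.le hY2.le
    have hmulA : a p * pdx z p =
        GoursatAux.G (GoursatAux.conv2 ac (GoursatAux.dxc u)) X Y := by
      rw [ha', hdx p.1 p.2 hX1 hY1]
      exact hconvA.tsum_eq.symm
    have hmulB : b p * pdy z p =
        GoursatAux.G (GoursatAux.conv2 bc (GoursatAux.dyc u)) X Y := by
      rw [hb', hdy p.1 p.2 hX1 hY1]
      exact hconvB.tsum_eq.symm
    have hmulC : c p * z p =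
        GoursatAux.G (GoursatAux.conv2 cc u) X Y := by
      rw [hc']
      have hzp : z p = GoursatAux.G u X Y := rfl
      rw [hzp]
      exact hconvC.tsum_eq.symm
    rw [hdxy, hmulA, hmulB, hmulC]
    -- now everything is a tsum; combine
    have s1 : Summable (GoursatAux.mono (GoursatAux.dyc (GoursatAux.dxc u)) X Y) :=
      HUxy.summable_mono hX3.le hY3.le
    have s2 : Summable (GoursatAux.mono (GoursatAux.conv2 ac (GoursatAux.dxc u)) X Y) :=
      hconvA.summable
    have s3 : Summable (GoursatAux.mono (GoursatAux.conv2 bc (GoursatAux.dyc u)) X Y) :=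
      hconvB.summable
    have s4 : Summable (GoursatAux.mono (GoursatAux.conv2 cc u) X Y) :=
      hconvC.summable
    have hcombine : GoursatAux.G (GoursatAux.dyc (GoursatAux.dxc u)) X Y
        + GoursatAux.G (GoursatAux.conv2 ac (GoursatAux.dxc u)) X Y
        + GoursatAux.G (GoursatAux.conv2 bc (GoursatAux.dyc u)) X Y
        + GoursatAux.G (GoursatAux.conv2 cc u) X Y
        = ∑' q : ℕ × ℕ, (GoursatAux.mono (GoursatAux.dyc (GoursatAux.dxc u)) X Y q
            + GoursatAux.mono (GoursatAux.conv2 ac (GoursatAux.dxc u)) X Y q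
            + GoursatAux.mono (GoursatAux.conv2 bc (GoursatAux.dyc u)) X Y q
            + GoursatAux.mono (GoursatAux.conv2 cc u) X Y q) := by
      rw [Summable.tsum_add ((s1.add s2).add s3) s4, Summable.tsum_add (s1.add s2) s3, Summable.tsum_add s1 s2]
      rfl
    rw [hcombine]
    have hzero : ∀ q : ℕ × ℕ, GoursatAux.mono (GoursatAux.dyc (GoursatAux.dxc u)) X Y q
        + GoursatAux.mono (GoursatAux.conv2 ac (GoursatAux.dxc u)) X Y q
        + GoursatAux.mono (GoursatAux.conv2 bc (GoursatAux.dyc u)) X Y q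
        + GoursatAux.mono (GoursatAux.conv2 cc u) X Y q = 0 := by
      rintro ⟨m, n⟩
      have hrec := GoursatAux.solU_pde ac bc cc φc ψc m n
      simp only [GoursatAux.mono]
      have hcoll : GoursatAux.dyc (GoursatAux.dxc u) (m, n) * X ^ m * Y ^ n
          + GoursatAux.conv2 ac (GoursatAux.dxc u) (m, n) * X ^ m * Y ^ n
          + GoursatAux.conv2 bc (GoursatAux.dyc u) (m, n) * X ^ m * Y ^ n
          + GoursatAux.conv2 cc u (m, n) * X ^ m * Y ^ n
          = (GoursatAux.dyc (GoursatAux.dxc u) (m, n)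
            + GoursatAux.conv2 ac (GoursatAux.dxc u) (m, n)
            + GoursatAux.conv2 bc (GoursatAux.dyc u) (m, n)
            + GoursatAux.conv2 cc u (m, n)) * (X ^ m * Y ^ n) := by
        ring
      exact hcoll.trans (by rw [hrec, zero_mul])
    rw [tsum_congr hzero, tsum_zero]
  · -- boundary condition on y = y₀
    intro x hp
    obtain ⟨hX3, _⟩ := hmemb (x, y₀) hp
    have hXρ : |x - x₀| ≤ ρ := le_trans hX3.le hR₃ρ
    have hzval : z (x, y₀) = GoursatAux.G u (x - x₀) 0 := by
      rw [hz]
      simp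
    rw [hzval]
    have hinj : Function.Injective (fun m : ℕ => ((m, 0) : ℕ × ℕ)) := by
      intro m m' h
      simpa [Prod.ext_iff] using h
    have hsupp : Function.support (GoursatAux.mono u (x - x₀) 0) ⊆
        Set.range (fun m : ℕ => ((m, 0) : ℕ × ℕ)) := by
      intro q hq
      rcases Nat.eq_zero_or_pos q.2 with h | h
      · exact ⟨q.1, by rw [Prod.ext_iff]; exact ⟨rfl, h.symm⟩⟩
      · exfalso
        apply hq
        simp only [GoursatAux.mono]
        rw [zero_pow (by omega), mul_zero]
    have h1 : (∑' m : ℕ, GoursatAux.mono u (x - x₀) 0 (m, 0))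
        = GoursatAux.G u (x - x₀) 0 :=
      Function.Injective.tsum_eq hinj hsupp
    rw [← h1]
    have h2 : ∀ m : ℕ, GoursatAux.mono u (x - x₀) 0 (m, 0) = φc m * (x - x₀) ^ m := by
      intro m
      simp only [GoursatAux.mono]
      have : u (m, 0) = φc m := GoursatAux.solU_base_x ac bc cc φc ψc m
      rw [this, pow_zero, mul_one]
    rw [tsum_congr h2, (HΦeq (x - x₀) (hXρ.trans hρφ')).tsum_eq]
    congr 1
    ring
  · -- boundary condition on x = x₀
    intro y hp
    obtain ⟨_, hY3⟩ := hmemb (x₀, y) hp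
    have hYρ : |y - y₀| ≤ ρ := le_trans hY3.le hR₃ρ
    have hzval : z (x₀, y) = GoursatAux.G u 0 (y - y₀) := by
      rw [hz]
      simp
    rw [hzval]
    have hinj : Function.Injective (fun n : ℕ => ((0, n) : ℕ × ℕ)) := by
      intro n n' h
      simpa [Prod.ext_iff] using h
    have hsupp : Function.support (GoursatAux.mono u 0 (y - y₀)) ⊆
        Set.range (fun n : ℕ => ((0, n) : ℕ × ℕ)) := by
      intro q hq
      rcases Nat.eq_zero_or_pos q.1 with h | h
      · exact ⟨q.2, by rw [Prod.ext_iff]; exact ⟨h.symm, rfl⟩⟩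
      · exfalso
        apply hq
        simp only [GoursatAux.mono]
        rw [zero_pow (by omega : q.1 ≠ 0), mul_zero, zero_mul]
    have h1 : (∑' n : ℕ, GoursatAux.mono u 0 (y - y₀) (0, n))
        = GoursatAux.G u 0 (y - y₀) :=
      Function.Injective.tsum_eq hinj hsupp
    rw [← h1]
    have h2 : ∀ n : ℕ, GoursatAux.mono u 0 (y - y₀) (0, n) = ψc n * (y - y₀) ^ n := by
      intro n
      simp only [GoursatAux.mono]
      have hun : u (0, n) = ψc n := by
        cases n with
        | zero =>
          have h3 : u (0, 0) = φc 0 := GoursatAux.solU_base_x ac bc cc φc ψc 0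
          rw [h3, hφ0, hcompat, ← hψ0]
        | succ n => exact GoursatAux.solU_base_y ac bc cc φc ψc n
      rw [hun, pow_zero]
      ring
    rw [tsum_congr h2, (HΨeq (y - y₀) (hYρ.trans hρψ')).tsum_eq]
    congr 1
    ring
end

section
/- Let x₀ < x₁ and y₀ < y₁ and let Q := [x₀, x₁] × [y₀, y₁]. Suppose z, u : ℝ² → ℝ are twice continuously differentiable on an open set containing Q, that L[z] = 0 and L*[u] = 0 on Q, and that u satisfies the Riemann-kernel characteristic conditions u(x, y₀) = exp(∫_{x₀}^{x} b(s, y₀) ds) for x ∈ [x₀, x₁] and u(x₀, y) = exp(∫_{y₀}^{y} a(x₀, s) ds) for y ∈ [y₀, y₁]. Then z(x₀, y₀) = u(x₁, y₁)·z(x₁, y₁) − ∫_{x₀}^{x₁} u(x, y₁)·(∂z/∂x(x, y₁) + b(x, y₁)·z(x, y₁)) dx − ∫_{y₀}^{y₁} u(x₁, y)·(∂z/∂y(x₁, y) + a(x₁, y)·z(x₁, y)) dy. -/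
open Set

/-- The canonical hyperbolic operator `L[z] = ∂²z/∂x∂y + a ∂z/∂x + b ∂z/∂y + c z`. -/
noncomputable def Lop (a b c z : ℝ × ℝ → ℝ) (p : ℝ × ℝ) : ℝ :=
  pdxy z p + a p * pdx z p + b p * pdy z p + c p * z p

/-- The adjoint operator `L*[u] = ∂²u/∂x∂y − ∂(au)/∂x − ∂(bu)/∂y + c u`. -/
noncomputable def LstarOp (a b c u : ℝ × ℝ → ℝ) (p : ℝ × ℝ) : ℝ :=
  pdxy u p - pdx (fun q => a q * u q) p - pdy (fun q => b q * u q) p + c p * u p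

/-! ### Auxiliary material -/

/-- Partial derivative in the first variable, via the Fréchet derivative. -/
noncomputable def fpx (f : ℝ × ℝ → ℝ) (p : ℝ × ℝ) : ℝ := fderiv ℝ f p (1, 0)

/-- Partial derivative in the second variable, via the Fréchet derivative. -/
noncomputable def fpy (f : ℝ × ℝ → ℝ) (p : ℝ × ℝ) : ℝ := fderiv ℝ f p (0, 1)

lemma hasDerivAt_px {f : ℝ × ℝ → ℝ} {p : ℝ × ℝ} (hf : DifferentiableAt ℝ f p) :
    HasDerivAt (fun x => f (x, p.2)) (fpx f p) p.1 := by
  have h1 : HasDerivAt (fun x : ℝ => (x, p.2)) ((1:ℝ), (0:ℝ)) p.1 :=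
    (hasDerivAt_id p.1).prodMk (hasDerivAt_const _ _)
  have := hf.hasFDerivAt.comp_hasDerivAt p.1 h1
  simpa [fpx, Function.comp_def] using this

lemma hasDerivAt_py {f : ℝ × ℝ → ℝ} {p : ℝ × ℝ} (hf : DifferentiableAt ℝ f p) :
    HasDerivAt (fun y => f (p.1, y)) (fpy f p) p.2 := by
  have h1 : HasDerivAt (fun y : ℝ => (p.1, y)) ((0:ℝ), (1:ℝ)) p.2 :=
    (hasDerivAt_const _ _).prodMk (hasDerivAt_id p.2)
  have := hf.hasFDerivAt.comp_hasDerivAt p.2 h1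
  simpa [fpy, Function.comp_def] using this

lemma pdx_eq {f : ℝ × ℝ → ℝ} {p : ℝ × ℝ} (hf : DifferentiableAt ℝ f p) :
    pdx f p = fpx f p := (hasDerivAt_px hf).deriv

lemma pdy_eq {f : ℝ × ℝ → ℝ} {p : ℝ × ℝ} (hf : DifferentiableAt ℝ f p) :
    pdy f p = fpy f p := (hasDerivAt_py hf).deriv

lemma contDiffOn_fpx {f : ℝ × ℝ → ℝ} {O : Set (ℝ × ℝ)} (hf : ContDiffOn ℝ 2 f O)
    (hO : IsOpen O) : ContDiffOn ℝ 1 (fpx f) O := by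
  have h : ContDiffOn ℝ 1 (fderiv ℝ f) O := hf.fderiv_of_isOpen hO (by norm_num)
  have := (ContinuousLinearMap.apply ℝ ℝ ((1:ℝ), (0:ℝ))).contDiff.comp_contDiffOn h
  exact this

lemma contDiffOn_fpy {f : ℝ × ℝ → ℝ} {O : Set (ℝ × ℝ)} (hf : ContDiffOn ℝ 2 f O)
    (hO : IsOpen O) : ContDiffOn ℝ 1 (fpy f) O := by
  have h : ContDiffOn ℝ 1 (fderiv ℝ f) O := hf.fderiv_of_isOpen hO (by norm_num)
  have := (ContinuousLinearMap.apply ℝ ℝ ((0:ℝ), (1:ℝ))).contDiff.comp_contDiffOn h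
  exact this

lemma continuousOn_fpx_of_c1 {f : ℝ × ℝ → ℝ} {O : Set (ℝ × ℝ)} (hf : ContDiffOn ℝ 1 f O)
    (hO : IsOpen O) : ContinuousOn (fpx f) O := by
  have h := hf.continuousOn_fderiv_of_isOpen hO le_rfl
  exact h.clm_apply continuousOn_const

lemma continuousOn_fpy_of_c1 {f : ℝ × ℝ → ℝ} {O : Set (ℝ × ℝ)} (hf : ContDiffOn ℝ 1 f O)
    (hO : IsOpen O) : ContinuousOn (fpy f) O := by
  have h := hf.continuousOn_fderiv_of_isOpen hO le_rfl
  exact h.clm_apply continuousOn_const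

lemma schwarz {f : ℝ × ℝ → ℝ} {O : Set (ℝ × ℝ)} {p : ℝ × ℝ} (hf : ContDiffOn ℝ 2 f O)
    (hO : IsOpen O) (hp : p ∈ O) : fpy (fpx f) p = fpx (fpy f) p := by
  have hfd : ContDiffAt ℝ 2 f p := hf.contDiffAt (hO.mem_nhds hp)
  have hsymm := hfd.isSymmSndFDerivAt (by simp)
  have hD : DifferentiableAt ℝ (fderiv ℝ f) p := by
    have : ContDiffAt ℝ (1+1) f p := by exact_mod_cast hfd
    exact this.fderiv_right le_rfl |>.differentiableAt one_ne_zero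
  have hfunx : fpx f = fun q => (ContinuousLinearMap.apply ℝ ℝ ((1:ℝ), (0:ℝ))) (fderiv ℝ f q) := by
    funext q; simp [fpx]
  have hfuny : fpy f = fun q => (ContinuousLinearMap.apply ℝ ℝ ((0:ℝ), (1:ℝ))) (fderiv ℝ f q) := by
    funext q; simp [fpy]
  have e1 : fpy (fpx f) p = fderiv ℝ (fderiv ℝ f) p ((0:ℝ), (1:ℝ)) ((1:ℝ), (0:ℝ)) := by
    have h := ((ContinuousLinearMap.apply ℝ ℝ ((1:ℝ), (0:ℝ))).hasFDerivAt
      (x := fderiv ℝ f p)).comp p hD.hasFDerivAt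
    have h' : HasFDerivAt (fpx f)
        (((ContinuousLinearMap.apply ℝ ℝ ((1:ℝ), (0:ℝ)))).comp (fderiv ℝ (fderiv ℝ f) p)) p := by
      rw [hfunx]; exact h
    simp [fpy, h'.fderiv]
  have e2 : fpx (fpy f) p = fderiv ℝ (fderiv ℝ f) p ((1:ℝ), (0:ℝ)) ((0:ℝ), (1:ℝ)) := by
    have h := ((ContinuousLinearMap.apply ℝ ℝ ((0:ℝ), (1:ℝ))).hasFDerivAt
      (x := fderiv ℝ f p)).comp p hD.hasFDerivAt
    have h' : HasFDerivAt (fpy f)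
        (((ContinuousLinearMap.apply ℝ ℝ ((0:ℝ), (1:ℝ)))).comp (fderiv ℝ (fderiv ℝ f) p)) p := by
      rw [hfuny]; exact h
    simp [fpx, h'.fderiv]
  rw [e1, e2, hsymm]

lemma pdxy_eq {f : ℝ × ℝ → ℝ} {O : Set (ℝ × ℝ)} {p : ℝ × ℝ} (hf : ContDiffOn ℝ 2 f O)
    (hO : IsOpen O) (hp : p ∈ O) : pdxy f p = fpy (fpx f) p := by
  have hOp : IsOpen {t : ℝ | ((p.1, t) : ℝ × ℝ) ∈ O} := hO.preimage (by fun_prop)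
  have hev : (fun t => pdx f (p.1, t)) =ᶠ[nhds p.2] fun t => fpx f (p.1, t) := by
    filter_upwards [hOp.mem_nhds hp] with t ht
    exact pdx_eq ((hf.differentiableOn two_ne_zero).differentiableAt (hO.mem_nhds ht))
  have hdiff : DifferentiableAt ℝ (fpx f) p :=
    ((contDiffOn_fpx hf hO).differentiableOn one_ne_zero).differentiableAt (hO.mem_nhds hp)
  calc pdxy f p = deriv (fun t => fpx f (p.1, t)) p.2 := hev.deriv_eq
    _ = fpy (fpx f) p := (hasDerivAt_py hdiff).deriv

/-- The quantity `P = u zₓ + b u z` appearing in the Green identity. -/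
noncomputable def Pf (b z u : ℝ × ℝ → ℝ) (p : ℝ × ℝ) : ℝ :=
  u p * fpx z p + b p * (u p * z p)

/-- The quantity `R = a u z − z u_y` appearing in the Green identity. -/
noncomputable def Rf (a z u : ℝ × ℝ → ℝ) (p : ℝ × ℝ) : ℝ :=
  a p * (u p * z p) - z p * fpy u p

/-- `∂P/∂y`. -/
noncomputable def Pyf (b z u : ℝ × ℝ → ℝ) (p : ℝ × ℝ) : ℝ :=
  (fpy u p * fpx z p + u p * fpy (fpx z) p) +
    (fpy b p * (u p * z p) + b p * (fpy u p * z p + u p * fpy z p))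

/-- `∂R/∂x`. -/
noncomputable def Rxf (a z u : ℝ × ℝ → ℝ) (p : ℝ × ℝ) : ℝ :=
  (fpx a p * (u p * z p) + a p * (fpx u p * z p + u p * fpx z p)) -
    (fpx z p * fpy u p + z p * fpx (fpy u) p)

/-- **Riemann's representation formula with data on the characteristics through
`(x₀, y₀)`**: if `L[z] = 0`, `L*[u] = 0` on `Q = [x₀,x₁] × [y₀,y₁]` and `u` is the
Riemann kernel with pole `(x₀, y₀)`, then the value `z (x₀, y₀)` is recovered from
the values of `z` on the two characteristics through `(x₁, y₁)`. -/
theorem riemann_representation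
    (a b c : ℝ × ℝ → ℝ) (ha : ContDiff ℝ 1 a) (hb : ContDiff ℝ 1 b) (hc : Continuous c)
    (x₀ x₁ y₀ y₁ : ℝ) (hx : x₀ < x₁) (hy : y₀ < y₁)
    (z u : ℝ × ℝ → ℝ)
    (O : Set (ℝ × ℝ)) (hO : IsOpen O) (hQO : Icc x₀ x₁ ×ˢ Icc y₀ y₁ ⊆ O)
    (hz : ContDiffOn ℝ 2 z O) (hu : ContDiffOn ℝ 2 u O)
    (hLz : ∀ p ∈ Icc x₀ x₁ ×ˢ Icc y₀ y₁, Lop a b c z p = 0)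
    (hLu : ∀ p ∈ Icc x₀ x₁ ×ˢ Icc y₀ y₁, LstarOp a b c u p = 0)
    (hub : ∀ x ∈ Icc x₀ x₁, u (x, y₀) = Real.exp (∫ s in x₀..x, b (s, y₀)))
    (hua : ∀ y ∈ Icc y₀ y₁, u (x₀, y) = Real.exp (∫ s in y₀..y, a (x₀, s))) :
    z (x₀, y₀) =
      u (x₁, y₁) * z (x₁, y₁)
        - (∫ x in x₀..x₁, u (x, y₁) * (pdx z (x, y₁) + b (x, y₁) * z (x, y₁)))
        - ∫ y in y₀..y₁, u (x₁, y) * (pdy z (x₁, y) + a (x₁, y) * z (x₁, y)) := by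
  have hdz : ∀ p ∈ O, DifferentiableAt ℝ z p := fun p hp =>
    (hz.differentiableOn two_ne_zero).differentiableAt (hO.mem_nhds hp)
  have hdu : ∀ p ∈ O, DifferentiableAt ℝ u p := fun p hp =>
    (hu.differentiableOn two_ne_zero).differentiableAt (hO.mem_nhds hp)
  have hda : Differentiable ℝ a := ha.differentiable one_ne_zero
  have hdb : Differentiable ℝ b := hb.differentiable one_ne_zero
  have hfxz := contDiffOn_fpx hz hO
  have hfyz := contDiffOn_fpy hz hO
  have hfxu := contDiffOn_fpx hu hO
  have hfyu := contDiffOn_fpy hu hO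
  have hdfxz : ∀ p ∈ O, DifferentiableAt ℝ (fpx z) p := fun p hp =>
    (hfxz.differentiableOn one_ne_zero).differentiableAt (hO.mem_nhds hp)
  have hdfyu : ∀ p ∈ O, DifferentiableAt ℝ (fpy u) p := fun p hp =>
    (hfyu.differentiableOn one_ne_zero).differentiableAt (hO.mem_nhds hp)
  -- continuity facts
  have hcz : ContinuousOn z O := hz.continuousOn
  have hcu : ContinuousOn u O := hu.continuousOn
  have hcfxz : ContinuousOn (fpx z) O := hfxz.continuousOn
  have hcfyz : ContinuousOn (fpy z) O := hfyz.continuousOn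
  have hcfxu : ContinuousOn (fpx u) O := hfxu.continuousOn
  have hcfyu : ContinuousOn (fpy u) O := hfyu.continuousOn
  have hcyxz : ContinuousOn (fpy (fpx z)) O := continuousOn_fpy_of_c1 hfxz hO
  have hcxyu : ContinuousOn (fpx (fpy u)) O := continuousOn_fpx_of_c1 hfyu hO
  have hcfa : Continuous (fpx a) := (ha.continuous_fderiv one_ne_zero).clm_apply continuous_const
  have hcfb : Continuous (fpy b) := (hb.continuous_fderiv one_ne_zero).clm_apply continuous_const
  have hcP : ContinuousOn (Pf b z u) O :=
    (hcu.mul hcfxz).add (hb.continuous.continuousOn.mul (hcu.mul hcz))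
  have hcR : ContinuousOn (Rf a z u) O :=
    (ha.continuous.continuousOn.mul (hcu.mul hcz)).sub (hcz.mul hcfyu)
  have hcPy : ContinuousOn (Pyf b z u) O :=
    ((hcfyu.mul hcfxz).add (hcu.mul hcyxz)).add
      ((hcfb.continuousOn.mul (hcu.mul hcz)).add
        (hb.continuous.continuousOn.mul ((hcfyu.mul hcz).add (hcu.mul hcfyz))))
  have hcRx : ContinuousOn (Rxf a z u) O :=
    ((hcfa.continuousOn.mul (hcu.mul hcz)).add
      (ha.continuous.continuousOn.mul ((hcfxu.mul hcz).add (hcu.mul hcfxz)))).sub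
        ((hcfxz.mul hcfyu).add (hcz.mul hcxyu))
  -- derivatives of P and R
  have hPd : ∀ p ∈ O, HasDerivAt (fun t => Pf b z u (p.1, t)) (Pyf b z u p) p.2 := by
    intro p hp
    have h1 := hasDerivAt_py (hdu p hp)
    have h2 := hasDerivAt_py (hdfxz p hp)
    have h3 : HasDerivAt (fun t => b (p.1, t)) (fpy b p) p.2 := hasDerivAt_py (hdb p)
    have h4 := hasDerivAt_py (hdz p hp)
    exact (h1.mul h2).add (h3.mul (h1.mul h4))
  have hRd : ∀ p ∈ O, HasDerivAt (fun t => Rf a z u (t, p.2)) (Rxf a z u p) p.1 := by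
    intro p hp
    have h1 := hasDerivAt_px (hdu p hp)
    have h2 := hasDerivAt_px (hdz p hp)
    have h3 : HasDerivAt (fun t => a (t, p.2)) (fpx a p) p.1 := hasDerivAt_px (hda p)
    have h4 := hasDerivAt_px (hdfyu p hp)
    exact (h3.mul (h1.mul h2)).sub (h2.mul h4)
  -- the pointwise Green identity
  have hsum : ∀ p ∈ Icc x₀ x₁ ×ˢ Icc y₀ y₁, Pyf b z u p + Rxf a z u p = 0 := by
    intro p hp
    have hpO := hQO hp
    have hz0 : fpy (fpx z) p + a p * fpx z p + b p * fpy z p + c p * z p = 0 := by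
      have h := hLz p hp
      simp only [Lop] at h
      rwa [pdxy_eq hz hO hpO, pdx_eq (hdz p hpO), pdy_eq (hdz p hpO)] at h
    have hu0 : fpx (fpy u) p - (fpx a p * u p + a p * fpx u p)
        - (fpy b p * u p + b p * fpy u p) + c p * u p = 0 := by
      have h := hLu p hp
      simp only [LstarOp] at h
      have e1 : pdxy u p = fpx (fpy u) p := (pdxy_eq hu hO hpO).trans (schwarz hu hO hpO)
      have e2 : pdx (fun q => a q * u q) p = fpx a p * u p + a p * fpx u p := by
        have h3 : HasDerivAt (fun t => a (t, p.2)) (fpx a p) p.1 := hasDerivAt_px (hda p)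
        exact (h3.mul (hasDerivAt_px (hdu p hpO))).deriv
      have e3 : pdy (fun q => b q * u q) p = fpy b p * u p + b p * fpy u p := by
        have h3 : HasDerivAt (fun t => b (p.1, t)) (fpy b p) p.2 := hasDerivAt_py (hdb p)
        exact (h3.mul (hasDerivAt_py (hdu p hpO))).deriv
      rwa [e1, e2, e3] at h
    simp only [Pyf, Rxf]
    linear_combination u p * hz0 - z p * hu0
  -- interval integrability helpers
  have hIIx : ∀ (g : ℝ × ℝ → ℝ), ContinuousOn g O → ∀ t ∈ Icc y₀ y₁,
      IntervalIntegrable (fun s => g (s, t)) MeasureTheory.volume x₀ x₁ := by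
    intro g hg t ht
    apply ContinuousOn.intervalIntegrable
    apply hg.comp (Continuous.continuousOn (by fun_prop))
    intro s hs
    exact hQO ⟨by rwa [uIcc_of_le hx.le] at hs, ht⟩
  have hIIy : ∀ (g : ℝ × ℝ → ℝ), ContinuousOn g O → ∀ s ∈ Icc x₀ x₁,
      IntervalIntegrable (fun t => g (s, t)) MeasureTheory.volume y₀ y₁ := by
    intro g hg s hs
    apply ContinuousOn.intervalIntegrable
    apply hg.comp (Continuous.continuousOn (by fun_prop))
    intro t ht
    exact hQO ⟨hs, by rwa [uIcc_of_le hy.le] at ht⟩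
  -- inner FTC computations
  have hInnerP : ∀ s ∈ Icc x₀ x₁,
      (∫ t in y₀..y₁, Pyf b z u (s, t)) = Pf b z u (s, y₁) - Pf b z u (s, y₀) := by
    intro s hs
    apply intervalIntegral.integral_eq_sub_of_hasDerivAt
    · intro t ht
      exact hPd (s, t) (hQO ⟨hs, by rwa [uIcc_of_le hy.le] at ht⟩)
    · exact hIIy _ hcPy s hs
  have hInnerR : ∀ t ∈ Icc y₀ y₁,
      (∫ s in x₀..x₁, Rxf a z u (s, t)) = Rf a z u (x₁, t) - Rf a z u (x₀, t) := by
    intro t ht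
    apply intervalIntegral.integral_eq_sub_of_hasDerivAt
    · intro s hs
      exact hRd (s, t) (hQO ⟨by rwa [uIcc_of_le hx.le] at hs, ht⟩)
    · exact hIIx _ hcRx t ht
  -- Fubini
  have hswap : (∫ s in x₀..x₁, ∫ t in y₀..y₁, Rxf a z u (s, t))
      = ∫ t in y₀..y₁, ∫ s in x₀..x₁, Rxf a z u (s, t) := by
    simp only [intervalIntegral.integral_of_le hx.le, intervalIntegral.integral_of_le hy.le]
    apply MeasureTheory.integral_integral_swap
    have h1 : MeasureTheory.IntegrableOn (Rxf a z u) (Icc x₀ x₁ ×ˢ Icc y₀ y₁) :=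
      (hcRx.mono hQO).integrableOn_compact (isCompact_Icc.prod isCompact_Icc)
    have h2 : MeasureTheory.IntegrableOn (Rxf a z u) (Ioc x₀ x₁ ×ˢ Ioc y₀ y₁) :=
      h1.mono_set (Set.prod_mono Ioc_subset_Icc_self Ioc_subset_Icc_self)
    rw [MeasureTheory.Measure.prod_restrict]
    rw [MeasureTheory.Measure.volume_eq_prod] at h2
    exact h2
  -- boundary term on `y = y₀`
  have hB : (∫ s in x₀..x₁, Pf b z u (s, y₀)) = u (x₁, y₀) * z (x₁, y₀) - z (x₀, y₀) := by
    have hcontg : ContinuousOn (fun s => u (s, y₀) * z (s, y₀)) (Icc x₀ x₁) := by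
      have hmaps : MapsTo (fun s : ℝ => ((s, y₀) : ℝ × ℝ)) (Icc x₀ x₁) O := fun s hs =>
        hQO ⟨hs, le_rfl, hy.le⟩
      exact ((hcu.mul hcz).comp (Continuous.continuousOn (by fun_prop)) hmaps)
    have hderiv : ∀ s ∈ Ioo x₀ x₁, HasDerivWithinAt (fun s => u (s, y₀) * z (s, y₀))
        (Pf b z u (s, y₀)) (Ioi s) s := by
      intro s hs
      have hsO : ((s, y₀) : ℝ × ℝ) ∈ O := hQO ⟨⟨hs.1.le, hs.2.le⟩, le_rfl, hy.le⟩
      have hbint : Continuous (fun t : ℝ => b (t, y₀)) := by fun_prop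
      have hI : HasDerivAt (fun t => ∫ r in x₀..t, b (r, y₀)) (b (s, y₀)) s :=
        intervalIntegral.integral_hasDerivAt_right (hbint.intervalIntegrable _ _)
          (hbint.stronglyMeasurableAtFilter _ _) hbint.continuousAt
      have hE := hI.exp
      have hU : HasDerivAt (fun t => u (t, y₀)) (u (s, y₀) * b (s, y₀)) s := by
        have hev : (fun t => u (t, y₀)) =ᶠ[nhds s]
            fun t => Real.exp (∫ r in x₀..t, b (r, y₀)) := by
          filter_upwards [Ioo_mem_nhds hs.1 hs.2] with t ht
          exact hub t ⟨ht.1.le, ht.2.le⟩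
        rw [hub s ⟨hs.1.le, hs.2.le⟩]
        exact hE.congr_of_eventuallyEq hev
      have hZ : HasDerivAt (fun t => z (t, y₀)) (fpx z (s, y₀)) s := hasDerivAt_px (hdz _ hsO)
      have heq : Pf b z u (s, y₀)
          = u (s, y₀) * b (s, y₀) * z (s, y₀) + u (s, y₀) * fpx z (s, y₀) := by
        simp only [Pf]; ring
      rw [heq]
      exact (hU.mul hZ).hasDerivWithinAt
    have hint : IntervalIntegrable (fun s => Pf b z u (s, y₀)) MeasureTheory.volume x₀ x₁ :=
      hIIx _ hcP y₀ ⟨le_rfl, hy.le⟩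
    rw [intervalIntegral.integral_eq_sub_of_hasDeriv_right_of_le hx.le hcontg hderiv hint]
    have h0 : u (x₀, y₀) = 1 := by
      rw [hub x₀ ⟨le_rfl, hx.le⟩, intervalIntegral.integral_same, Real.exp_zero]
    rw [h0]; ring
  -- boundary term on `x = x₀`
  have hD : (∫ t in y₀..y₁, Rf a z u (x₀, t)) = 0 := by
    have hzero : ∀ t ∈ Ioo y₀ y₁, Rf a z u (x₀, t) = 0 := by
      intro t ht
      have htO : ((x₀, t) : ℝ × ℝ) ∈ O := hQO ⟨⟨le_rfl, hx.le⟩, ht.1.le, ht.2.le⟩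
      have haint : Continuous (fun r : ℝ => a (x₀, r)) := by fun_prop
      have hI : HasDerivAt (fun r => ∫ w in y₀..r, a (x₀, w)) (a (x₀, t)) t :=
        intervalIntegral.integral_hasDerivAt_right (haint.intervalIntegrable _ _)
          (haint.stronglyMeasurableAtFilter _ _) haint.continuousAt
      have hE := hI.exp
      have hU : HasDerivAt (fun r => u (x₀, r)) (u (x₀, t) * a (x₀, t)) t := by
        have hev : (fun r => u (x₀, r)) =ᶠ[nhds t]
            fun r => Real.exp (∫ w in y₀..r, a (x₀, w)) := by
          filter_upwards [Ioo_mem_nhds ht.1 ht.2] with r hr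
          exact hua r ⟨hr.1.le, hr.2.le⟩
        rw [hua t ⟨ht.1.le, ht.2.le⟩]
        exact hE.congr_of_eventuallyEq hev
      have huniq : fpy u (x₀, t) = u (x₀, t) * a (x₀, t) :=
        (hasDerivAt_py (hdu _ htO)).unique hU
      simp only [Rf]
      rw [huniq]; ring
    rw [intervalIntegral.integral_of_le hy.le, MeasureTheory.integral_Ioc_eq_integral_Ioo,
      MeasureTheory.setIntegral_congr_fun measurableSet_Ioo hzero]
    simp
  -- FTC for `u z` along `x = x₁`
  have hG : (∫ t in y₀..y₁, (fpy u (x₁, t) * z (x₁, t) + u (x₁, t) * fpy z (x₁, t)))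
      = u (x₁, y₁) * z (x₁, y₁) - u (x₁, y₀) * z (x₁, y₀) := by
    apply intervalIntegral.integral_eq_sub_of_hasDerivAt
    · intro t ht
      have htO : ((x₁, t) : ℝ × ℝ) ∈ O :=
        hQO ⟨⟨hx.le, le_rfl⟩, by rwa [uIcc_of_le hy.le] at ht⟩
      exact (hasDerivAt_py (hdu _ htO)).mul (hasDerivAt_py (hdz _ htO))
    · exact hIIy _ ((hcfyu.mul hcz).add (hcu.mul hcfyz)) x₁ ⟨hx.le, le_rfl⟩
  -- rewrite the target integrals
  have hT1 : (∫ s in x₀..x₁, u (s, y₁) * (pdx z (s, y₁) + b (s, y₁) * z (s, y₁)))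
      = ∫ s in x₀..x₁, Pf b z u (s, y₁) := by
    apply intervalIntegral.integral_congr
    intro s hs
    have hsO : ((s, y₁) : ℝ × ℝ) ∈ O :=
      hQO ⟨by rwa [uIcc_of_le hx.le] at hs, hy.le, le_rfl⟩
    simp only [Pf]
    rw [pdx_eq (hdz _ hsO)]; ring
  have hT2 : (∫ t in y₀..y₁, u (x₁, t) * (pdy z (x₁, t) + a (x₁, t) * z (x₁, t)))
      = (∫ t in y₀..y₁, Rf a z u (x₁, t))
        + ∫ t in y₀..y₁, (fpy u (x₁, t) * z (x₁, t) + u (x₁, t) * fpy z (x₁, t)) := by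
    rw [← intervalIntegral.integral_add (g := fun t => fpy u (x₁, t) * z (x₁, t) + u (x₁, t) * fpy z (x₁, t)) (hIIy _ hcR x₁ ⟨hx.le, le_rfl⟩)
      (hIIy _ ((hcfyu.mul hcz).add (hcu.mul hcfyz)) x₁ ⟨hx.le, le_rfl⟩)]
    apply intervalIntegral.integral_congr
    intro t ht
    have htO : ((x₁, t) : ℝ × ℝ) ∈ O :=
      hQO ⟨⟨hx.le, le_rfl⟩, by rwa [uIcc_of_le hy.le] at ht⟩
    simp only [Rf]
    rw [pdy_eq (hdz _ htO)]; ring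
  -- the main Green/Fubini identity
  have hMain : (∫ s in x₀..x₁, Pf b z u (s, y₁)) - (∫ s in x₀..x₁, Pf b z u (s, y₀))
      = -((∫ t in y₀..y₁, Rf a z u (x₁, t)) - ∫ t in y₀..y₁, Rf a z u (x₀, t)) := by
    have e1 : (∫ s in x₀..x₁, Pf b z u (s, y₁)) - (∫ s in x₀..x₁, Pf b z u (s, y₀))
        = ∫ s in x₀..x₁, (Pf b z u (s, y₁) - Pf b z u (s, y₀)) :=
      (intervalIntegral.integral_sub (hIIx _ hcP y₁ ⟨hy.le, le_rfl⟩)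
        (hIIx _ hcP y₀ ⟨le_rfl, hy.le⟩)).symm
    have e2 : (∫ s in x₀..x₁, (Pf b z u (s, y₁) - Pf b z u (s, y₀)))
        = ∫ s in x₀..x₁, -∫ t in y₀..y₁, Rxf a z u (s, t) := by
      apply intervalIntegral.integral_congr
      intro s hs
      have hsI : s ∈ Icc x₀ x₁ := by rwa [uIcc_of_le hx.le] at hs
      show Pf b z u (s, y₁) - Pf b z u (s, y₀) = -∫ t in y₀..y₁, Rxf a z u (s, t)
      rw [← hInnerP s hsI, ← intervalIntegral.integral_neg]
      apply intervalIntegral.integral_congr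
      intro t ht
      have htI : t ∈ Icc y₀ y₁ := by rwa [uIcc_of_le hy.le] at ht
      have := hsum (s, t) ⟨hsI, htI⟩
      show Pyf b z u (s, t) = -Rxf a z u (s, t)
      linarith
    have e3 : (∫ s in x₀..x₁, -∫ t in y₀..y₁, Rxf a z u (s, t))
        = -∫ s in x₀..x₁, ∫ t in y₀..y₁, Rxf a z u (s, t) := intervalIntegral.integral_neg
    have e4 : (∫ t in y₀..y₁, ∫ s in x₀..x₁, Rxf a z u (s, t))
        = ∫ t in y₀..y₁, (Rf a z u (x₁, t) - Rf a z u (x₀, t)) := by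
      apply intervalIntegral.integral_congr
      intro t ht
      exact hInnerR t (by rwa [uIcc_of_le hy.le] at ht)
    have e5 : (∫ t in y₀..y₁, (Rf a z u (x₁, t) - Rf a z u (x₀, t)))
        = (∫ t in y₀..y₁, Rf a z u (x₁, t)) - ∫ t in y₀..y₁, Rf a z u (x₀, t) :=
      intervalIntegral.integral_sub (hIIy _ hcR x₁ ⟨hx.le, le_rfl⟩)
        (hIIy _ hcR x₀ ⟨le_rfl, hx.le⟩)
    rw [e1, e2, e3, hswap, e4, e5]
  rw [hT1, hT2, hG]
  rw [hD] at hMain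
  rw [hB] at hMain
  linarith [hMain]
end

section
/- Let A ≥ 0 and t₀ > 0, and let y : [0, t₀] → ℝ be differentiable with y(t) ≥ 0 for all t and y′(t) ≤ 2A·√(y(t)) for all t ∈ [0, t₀]. Then for every t ∈ [0, t₀], y(t) ≤ (√(y(0)) + A·t)². -/
/-- **Square-root Gronwall comparison estimate**: if `y ≥ 0` is differentiable on
`[0, t₀]` with `y′ ≤ 2A√y` there (`A ≥ 0`), then `y t ≤ (√(y 0) + A·t)²` on `[0, t₀]`. -/
theorem sqrt_gronwall
    (A t₀ : ℝ) (hA : 0 ≤ A) (ht₀ : 0 < t₀) (y : ℝ → ℝ)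
    (hdiff : ∀ t ∈ Set.Icc (0 : ℝ) t₀, DifferentiableAt ℝ y t)
    (hpos : ∀ t ∈ Set.Icc (0 : ℝ) t₀, 0 ≤ y t)
    (hderiv : ∀ t ∈ Set.Icc (0 : ℝ) t₀, deriv y t ≤ 2 * A * Real.sqrt (y t)) :
    ∀ t ∈ Set.Icc (0 : ℝ) t₀, y t ≤ (Real.sqrt (y 0) + A * t) ^ 2 := by
  intro t ht
  have hy0 : 0 ≤ Real.sqrt (y 0) := Real.sqrt_nonneg _
  have ht0 : 0 ≤ t := ht.1
  -- Step 1: for every ε > 0, y t ≤ ((√(y 0)+ε) + (A+ε)·t)².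
  have key : ∀ ε > (0:ℝ), y t ≤ ((Real.sqrt (y 0) + ε) + (A + ε) * t) ^ 2 := by
    intro ε hε
    set c := Real.sqrt (y 0) + ε with hc
    set m := A + ε with hm
    have hcpos : 0 < c := by positivity
    have hmpos : 0 < m := by positivity
    have hAm : A < m := by simp [hm]; linarith
    have hB : ∀ x : ℝ, HasDerivAt (fun s => (c + m * s) ^ 2) (2 * m * (c + m * x)) x := by
      intro x
      have h1 : HasDerivAt (fun s : ℝ => c + m * s) m x := by
        simpa using ((hasDerivAt_id x).const_mul m).const_add c
      have := h1.fun_pow 2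
      exact this.congr_deriv (by ring)
    have main := image_le_of_deriv_right_lt_deriv_boundary
      (f := y) (f' := deriv y) (a := 0) (b := t₀)
      (fun x hx => (hdiff x hx).continuousAt.continuousWithinAt)
      (fun x hx => ((hdiff x (Set.mem_Icc.mpr ⟨hx.1, hx.2.le⟩)).hasDerivAt).hasDerivWithinAt)
      (B := fun s => (c + m * s) ^ 2) (B' := fun s => 2 * m * (c + m * s))
      (by
        simp only [mul_zero, add_zero]
        calc y 0 = Real.sqrt (y 0) ^ 2 := by
              rw [Real.sq_sqrt (hpos 0 (by constructor <;> [rfl; exact ht₀.le]))]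
          _ ≤ c ^ 2 := by nlinarith)
      hB
      (by
        intro x hx heq
        have hxIcc : x ∈ Set.Icc (0:ℝ) t₀ := ⟨hx.1, hx.2.le⟩
        have hcm : 0 < c + m * x := by nlinarith [hx.1]
        have hsq : Real.sqrt (y x) = c + m * x := by
          rw [heq, Real.sqrt_sq hcm.le]
        calc deriv y x ≤ 2 * A * Real.sqrt (y x) := hderiv x hxIcc
          _ = 2 * A * (c + m * x) := by rw [hsq]
          _ < 2 * m * (c + m * x) := by nlinarith)
    exact main ht
  -- Step 2: let ε → 0⁺.
  have htend : Filter.Tendsto (fun ε : ℝ => ((Real.sqrt (y 0) + ε) + (A + ε) * t) ^ 2)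
      (nhdsWithin 0 (Set.Ioi 0)) (nhds ((Real.sqrt (y 0) + A * t) ^ 2)) := by
    have : Filter.Tendsto (fun ε : ℝ => ((Real.sqrt (y 0) + ε) + (A + ε) * t) ^ 2)
        (nhds 0) (nhds ((Real.sqrt (y 0) + A * t) ^ 2)) := by
      have := (Continuous.fun_pow (by continuity :
        Continuous (fun ε : ℝ => (Real.sqrt (y 0) + ε) + (A + ε) * t)) 2).tendsto 0
      simpa using this
    exact this.mono_left nhdsWithin_le_nhds
  refine ge_of_tendsto htend ?_
  filter_upwards [self_mem_nhdsWithin] with ε hε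
  exact key ε hε
end
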